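/- arXiv:2306.05020 — 5 statements merged into one kernel-verified Lean document; each statement's English description precedes it below -/
import Mathlib

section
/- For $k = 2\ell+1 > 7$ odd, the sets $\{1,2,4,6,8,\dots,2\ell-2,2\ell\}$ and $\{1,2,4,5,7,8,10,\dots,2\ell-2,2\ell\}$ are minimal vertex covers of the cycle $C_k$ of cardinalities $\ell+1$ and $\ell+2$ respectively; hence $C_k$ is not unmixed for odd $k > 7$. -/
/-- The cycle graph `C_k` on `ZMod k`. -/
def cycleG (k : ℕ) : SimpleGraph (ZMod k) where
  Adj i j := i ≠ j ∧ (j = i + 1 ∨ i = j + 1)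
  symm := ⟨by rintro i j ⟨h1, h2⟩; exact ⟨h1.symm, h2.symm⟩⟩
  loopless := ⟨by rintro i ⟨h1, _⟩; exact h1 rfl⟩

/-- A vertex cover of a graph on `ZMod k`. -/
def IsVCov {k : ℕ} (G : SimpleGraph (ZMod k)) (C : Finset (ZMod k)) : Prop :=
  ∀ ⦃i j⦄, G.Adj i j → i ∈ C ∨ j ∈ C

/-- A minimal vertex cover. -/
def IsMinVCov {k : ℕ} (G : SimpleGraph (ZMod k)) (C : Finset (ZMod k)) : Prop :=
  IsVCov G C ∧ ∀ C' ⊆ C, IsVCov G C' → C' = C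

theorem stmt13aux (ℓ : ℕ) (hl : 4 ≤ ℓ) (k : ℕ) (hk : k = 2 * ℓ + 1)
    (A B : Finset (ZMod k))
    (hAdef : A = (insert 1 ((Finset.Icc 1 ℓ).image (fun j => 2 * j))).image
      (Nat.cast : ℕ → ZMod k))
    (hBdef : B = (({1, 2, 4, 5, 7, 8} : Finset ℕ) ∪ (Finset.Icc 5 ℓ).image (fun j => 2 * j)).image
      (Nat.cast : ℕ → ZMod k)) :
    IsMinVCov (cycleG k) A ∧ IsMinVCov (cycleG k) B ∧ A.card = ℓ + 1 ∧ B.card = ℓ + 2 := by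
  haveI : NeZero k := ⟨by omega⟩
  -- cast injectivity on [0, k)
  have hcast : ∀ a b : ℕ, a < k → b < k → (a : ZMod k) = (b : ZMod k) → a = b := by
    intro a b ha hb h
    have := congrArg ZMod.val h
    rwa [ZMod.val_natCast_of_lt ha, ZMod.val_natCast_of_lt hb] at this
  -- membership characterizations
  have hmemA : ∀ n : ℕ, n < k →
      (((n : ℕ) : ZMod k) ∈ A ↔ (n = 1 ∨ (n % 2 = 0 ∧ 2 ≤ n ∧ n ≤ 2 * ℓ))) := by
    intro n hn
    rw [hAdef]
    simp only [Finset.mem_image, Finset.mem_insert, Finset.mem_Icc]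
    constructor
    · rintro ⟨m, (rfl | ⟨j, ⟨hj1, hj2⟩, rfl⟩), hcm⟩
      · have := hcast 1 n (by omega) hn hcm; omega
      · have := hcast (2 * j) n (by omega) hn hcm; omega
    · rintro (rfl | ⟨h1, h2, h3⟩)
      · exact ⟨1, Or.inl rfl, rfl⟩
      · exact ⟨n, Or.inr ⟨n / 2, ⟨by omega, by omega⟩, by omega⟩, rfl⟩
  have hmemB : ∀ n : ℕ, n < k →
      (((n : ℕ) : ZMod k) ∈ B ↔
        (n = 1 ∨ n = 2 ∨ n = 4 ∨ n = 5 ∨ n = 7 ∨ n = 8 ∨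
          (n % 2 = 0 ∧ 10 ≤ n ∧ n ≤ 2 * ℓ))) := by
    intro n hn
    rw [hBdef]
    simp only [Finset.mem_image, Finset.mem_union, Finset.mem_insert, Finset.mem_singleton,
      Finset.mem_Icc]
    constructor
    · rintro ⟨m, hm | ⟨j, ⟨hj1, hj2⟩, rfl⟩, hcm⟩
      · have hmk : m < k := by omega
        have := hcast m n hmk hn hcm; omega
      · have := hcast (2 * j) n (by omega) hn hcm; omega
    · rintro (rfl | rfl | rfl | rfl | rfl | rfl | ⟨h1, h2, h3⟩)
      · exact ⟨1, Or.inl (Or.inl rfl), rfl⟩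
      · exact ⟨2, Or.inl (Or.inr (Or.inl rfl)), rfl⟩
      · exact ⟨4, Or.inl (Or.inr (Or.inr (Or.inl rfl))), rfl⟩
      · exact ⟨5, Or.inl (Or.inr (Or.inr (Or.inr (Or.inl rfl)))), rfl⟩
      · exact ⟨7, Or.inl (Or.inr (Or.inr (Or.inr (Or.inr (Or.inl rfl))))), rfl⟩
      · exact ⟨8, Or.inl (Or.inr (Or.inr (Or.inr (Or.inr (Or.inr rfl))))), rfl⟩
      · exact ⟨n, Or.inr ⟨n / 2, ⟨by omega, by omega⟩, by omega⟩, rfl⟩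
  -- generic cover criterion
  have coverOf : ∀ C : Finset (ZMod k),
      (∀ n : ℕ, n < k → ((n : ℕ) : ZMod k) ∈ C ∨ (((n + 1 : ℕ)) : ZMod k) ∈ C) →
      IsVCov (cycleG k) C := by
    intro C h i j hij
    obtain ⟨-, hor⟩ := hij
    have key : ∀ x : ZMod k, x ∈ C ∨ x + 1 ∈ C := by
      intro x
      have hx := h x.val x.val_lt
      rwa [Nat.cast_add, Nat.cast_one, ZMod.natCast_val, ZMod.cast_id] at hx
    rcases hor with rfl | rfl
    · exact key i
    · exact (key j).symm
  -- generic minimality criterion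
  have minOf : ∀ C : Finset (ZMod k), IsVCov (cycleG k) C →
      (∀ a ∈ C, ∃ b, (cycleG k).Adj a b ∧ b ∉ C) → IsMinVCov (cycleG k) C := by
    intro C hC hm
    refine ⟨hC, fun C' hsub hC' => Finset.Subset.antisymm hsub fun a ha => ?_⟩
    obtain ⟨b, hadj, hb⟩ := hm a ha
    rcases hC' hadj with h | h
    · exact h
    · exact absurd (hsub h) hb
  -- adjacency helper
  have adjH : ∀ m n : ℕ, m < k → n < k → m ≠ n →
      (n = m + 1 ∨ m = n + 1 ∨ (m = 0 ∧ n + 1 = k) ∨ (n = 0 ∧ m + 1 = k)) →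
      (cycleG k).Adj (m : ZMod k) (n : ZMod k) := by
    intro m n hm hn hmn h
    refine ⟨fun he => hmn (hcast m n hm hn he), ?_⟩
    rcases h with rfl | rfl | ⟨rfl, hnk⟩ | ⟨rfl, hmk2⟩
    · left; push_cast; ring
    · right; push_cast; ring
    · right
      have h0 : ((n + 1 : ℕ) : ZMod k) = 0 := by rw [hnk, ZMod.natCast_self]
      push_cast at h0
      rw [Nat.cast_zero]
      exact h0.symm
    · left
      have h0 : ((m + 1 : ℕ) : ZMod k) = 0 := by rw [hmk2, ZMod.natCast_self]
      push_cast at h0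
      rw [Nat.cast_zero]
      exact h0.symm
  -- A is a vertex cover
  have coverA : IsVCov (cycleG k) A := by
    apply coverOf
    intro n hn
    by_cases hc : n = 1 ∨ (n % 2 = 0 ∧ 2 ≤ n ∧ n ≤ 2 * ℓ)
    · exact Or.inl ((hmemA n hn).mpr hc)
    · exact Or.inr ((hmemA (n + 1) (by omega)).mpr (by omega))
  have coverB : IsVCov (cycleG k) B := by
    apply coverOf
    intro n hn
    by_cases hc : n = 1 ∨ n = 2 ∨ n = 4 ∨ n = 5 ∨ n = 7 ∨ n = 8 ∨
        (n % 2 = 0 ∧ 10 ≤ n ∧ n ≤ 2 * ℓ)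
    · exact Or.inl ((hmemB n hn).mpr hc)
    · exact Or.inr ((hmemB (n + 1) (by omega)).mpr (by omega))
  -- minimality of A
  have minA : IsMinVCov (cycleG k) A := by
    apply minOf _ coverA
    intro a ha
    rw [hAdef] at ha
    obtain ⟨m, hm, rfl⟩ := Finset.mem_image.mp ha
    simp only [Finset.mem_insert, Finset.mem_image, Finset.mem_Icc] at hm
    have hm' : m = 1 ∨ (m % 2 = 0 ∧ 2 ≤ m ∧ m ≤ 2 * ℓ) := by
      rcases hm with rfl | ⟨j, ⟨hj1, hj2⟩, rfl⟩ <;> omega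
    have hmk : m < k := by omega
    by_cases h1 : m = 1
    · refine ⟨((0 : ℕ) : ZMod k), adjH m 0 hmk (by omega) (by omega) (by omega), fun hb => ?_⟩
      have := (hmemA 0 (by omega)).mp hb; omega
    · by_cases h2 : m = 2 * ℓ
      · refine ⟨((0 : ℕ) : ZMod k), adjH m 0 hmk (by omega) (by omega) (by omega), fun hb => ?_⟩
        have := (hmemA 0 (by omega)).mp hb; omega
      · refine ⟨((m + 1 : ℕ) : ZMod k),
          adjH m (m + 1) hmk (by omega) (by omega) (by omega), fun hb => ?_⟩
        have := (hmemA (m + 1) (by omega)).mp hb; omega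
  -- minimality of B
  have minB : IsMinVCov (cycleG k) B := by
    apply minOf _ coverB
    intro a ha
    rw [hBdef] at ha
    obtain ⟨m, hm, rfl⟩ := Finset.mem_image.mp ha
    simp only [Finset.mem_union, Finset.mem_insert, Finset.mem_singleton, Finset.mem_image,
      Finset.mem_Icc] at hm
    have hm' : m = 1 ∨ m = 2 ∨ m = 4 ∨ m = 5 ∨ m = 7 ∨ m = 8 ∨
        (m % 2 = 0 ∧ 10 ≤ m ∧ m ≤ 2 * ℓ) := by
      rcases hm with (rfl | rfl | rfl | rfl | rfl | rfl) | ⟨j, ⟨hj1, hj2⟩, rfl⟩ <;> omega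
    have hmk : m < k := by omega
    rcases hm' with rfl | rfl | rfl | rfl | rfl | rfl | ⟨h1, h2, h3⟩
    · refine ⟨((0 : ℕ) : ZMod k), adjH 1 0 hmk (by omega) (by omega) (by omega), fun hb => ?_⟩
      have := (hmemB 0 (by omega)).mp hb; omega
    · refine ⟨((3 : ℕ) : ZMod k), adjH 2 3 hmk (by omega) (by omega) (by omega), fun hb => ?_⟩
      have := (hmemB 3 (by omega)).mp hb; omega
    · refine ⟨((3 : ℕ) : ZMod k), adjH 4 3 hmk (by omega) (by omega) (by omega), fun hb => ?_⟩
      have := (hmemB 3 (by omega)).mp hb; omega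
    · refine ⟨((6 : ℕ) : ZMod k), adjH 5 6 hmk (by omega) (by omega) (by omega), fun hb => ?_⟩
      have := (hmemB 6 (by omega)).mp hb; omega
    · refine ⟨((6 : ℕ) : ZMod k), adjH 7 6 hmk (by omega) (by omega) (by omega), fun hb => ?_⟩
      have := (hmemB 6 (by omega)).mp hb; omega
    · by_cases h4 : ℓ = 4
      · refine ⟨((0 : ℕ) : ZMod k), adjH 8 0 hmk (by omega) (by omega) (by omega), fun hb => ?_⟩
        have := (hmemB 0 (by omega)).mp hb; omega
      · refine ⟨((9 : ℕ) : ZMod k), adjH 8 9 hmk (by omega) (by omega) (by omega), fun hb => ?_⟩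
        have := (hmemB 9 (by omega)).mp hb; omega
    · by_cases h4 : m = 2 * ℓ
      · refine ⟨((0 : ℕ) : ZMod k), adjH m 0 hmk (by omega) (by omega) (by omega), fun hb => ?_⟩
        have := (hmemB 0 (by omega)).mp hb; omega
      · refine ⟨((m + 1 : ℕ) : ZMod k),
          adjH m (m + 1) hmk (by omega) (by omega) (by omega), fun hb => ?_⟩
        have := (hmemB (m + 1) (by omega)).mp hb; omega
  -- cardinalities
  have hboundA : ∀ m ∈ insert 1 ((Finset.Icc 1 ℓ).image fun j => 2 * j), m < k := by
    intro m hm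
    simp only [Finset.mem_insert, Finset.mem_image, Finset.mem_Icc] at hm
    rcases hm with rfl | ⟨j, ⟨hj1, hj2⟩, rfl⟩ <;> omega
  have cardA : A.card = ℓ + 1 := by
    rw [hAdef, Finset.card_image_of_injOn
      (fun a ha b hb h => hcast a b (hboundA a ha) (hboundA b hb) h),
      Finset.card_insert_of_notMem (by
        simp only [Finset.mem_image, Finset.mem_Icc]
        rintro ⟨j, -, h⟩; omega),
      Finset.card_image_of_injective _ (fun a b h => by omega), Nat.card_Icc]
    omega
  have hboundB : ∀ m ∈ ({1, 2, 4, 5, 7, 8} : Finset ℕ) ∪ (Finset.Icc 5 ℓ).image fun j => 2 * j,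
      m < k := by
    intro m hm
    simp only [Finset.mem_union, Finset.mem_insert, Finset.mem_singleton, Finset.mem_image,
      Finset.mem_Icc] at hm
    rcases hm with (rfl | rfl | rfl | rfl | rfl | rfl) | ⟨j, ⟨hj1, hj2⟩, rfl⟩ <;> omega
  have cardB : B.card = ℓ + 2 := by
    rw [hBdef, Finset.card_image_of_injOn
      (fun a ha b hb h => hcast a b (hboundB a ha) (hboundB b hb) h),
      Finset.card_union_of_disjoint (by
        rw [Finset.disjoint_left]
        intro a ha hb
        simp only [Finset.mem_insert, Finset.mem_singleton] at ha
        simp only [Finset.mem_image, Finset.mem_Icc] at hb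
        obtain ⟨j, ⟨hj1, hj2⟩, rfl⟩ := hb
        omega),
      Finset.card_image_of_injective _ (fun a b h => by omega), Nat.card_Icc]
    have h6 : ({1, 2, 4, 5, 7, 8} : Finset ℕ).card = 6 := by decide
    omega
  exact ⟨minA, minB, cardA, cardB⟩

/-- For odd `k = 2ℓ+1 > 7`, the sets `{1,2,4,6,8,…,2ℓ}` and
`{1,2,4,5,7,8,10,…,2ℓ-2,2ℓ}` are minimal vertex covers of the cycle `C_k` of
cardinalities `ℓ+1` and `ℓ+2` respectively; hence `C_k` is not unmixed. -/
theorem stmt13 (ℓ : ℕ) (hl : 4 ≤ ℓ) :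
    let k := 2 * ℓ + 1
    let A : Finset (ZMod k) :=
      (insert 1 ((Finset.Icc 1 ℓ).image (fun j => 2 * j))).image (Nat.cast : ℕ → ZMod k)
    let B : Finset (ZMod k) :=
      (({1, 2, 4, 5, 7, 8} : Finset ℕ) ∪ (Finset.Icc 5 ℓ).image (fun j => 2 * j)).image
        (Nat.cast : ℕ → ZMod k)
    IsMinVCov (cycleG k) A ∧ IsMinVCov (cycleG k) B ∧
      A.card = ℓ + 1 ∧ B.card = ℓ + 2 ∧
      ¬ ∀ C₁ C₂ : Finset (ZMod k), IsMinVCov (cycleG k) C₁ → IsMinVCov (cycleG k) C₂ →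
          C₁.card = C₂.card := by
  intro k A B
  obtain ⟨minA, minB, cardA, cardB⟩ := stmt13aux ℓ hl k rfl A B rfl rfl
  refine ⟨minA, minB, cardA, cardB, fun h => ?_⟩
  have := h A B minA minB
  rw [cardA, cardB] at this
  omega
end

section
/- Let $G = C_k$ be the odd cycle with $k = 2\ell+1$ vertices and let $Q_i$ be the ideal of $R_G$ generated by all monomials $x_Ft$ with $F$ a face of $G$ (singleton or edge) containing $i$. If a monomial $u = x_1^{a_1}\cdots x_k^{a_k}t^b$ lies in $\bigcap_{i=1}^k Q_i$, then $a_i \ge 1$ for all $i$ and $b \ge \ell+1$; that is, the initial degree (in the $t$-grading) of $\bigcap_{i=1}^k Q_i$ is $\ell+1$. -/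
open MvPolynomial

set_option synthInstance.maxHeartbeats 1000000

noncomputable section

/-- The ambient polynomial ring `K[x_i : i ∈ V][t]`, with the variable `none` playing
the role of `t`. -/
abbrev Amb (K V : Type*) [CommSemiring K] := MvPolynomial (Option V) K

variable (K : Type*) [Field K] {V : Type*} [DecidableEq V]

/-- The generator `t`. -/
def tGen : Amb K V := X none

/-- The generator `x_i t`. -/
def vGen (i : V) : Amb K V := X (some i) * X none

/-- The generator `x_i x_j t`. -/
def eGen (i j : V) : Amb K V := X (some i) * X (some j) * X none

variable (G : SimpleGraph V)

/-- The toric ring `R_G = K[t, {x_i t}, {x_i x_j t : {i,j} ∈ E(G)}]` of the graph `G`. -/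
def RG : Subalgebra K (Amb K V) :=
  Algebra.adjoin K
    ({tGen K} ∪ Set.range (vGen K (V := V)) ∪ {p | ∃ i j, G.Adj i j ∧ p = eGen K i j})

/-- The faces of the one-dimensional simplicial complex attached to `G`. -/
def IsFace (F : Finset V) : Prop :=
  F = ∅ ∨ (∃ i, F = {i}) ∨ ∃ i j, G.Adj i j ∧ F = {i, j}

/-- The monomial `x_F t`. -/
def faceMon (F : Finset V) : Amb K V := (∏ i ∈ F, X (some i)) * X none

/-- The ideal `P_0 = (t, x_1 t, …, x_n t)` of `R_G`. -/
def P0 : Ideal (RG K G) :=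
  Ideal.span {u : RG K G | ((u : Amb K V) = tGen K) ∨ ∃ i, (u : Amb K V) = vGen K i}

/-- The principal ideal `(t)` of `R_G`. -/
def tIdeal : Ideal (RG K G) := Ideal.span {u : RG K G | (u : Amb K V) = tGen K}

/-- The ideal `P_C` generated by the monomials `x_F t` for faces `F ⊆ C`. -/
def PC (C : Finset V) : Ideal (RG K G) :=
  Ideal.span {u : RG K G | ∃ F : Finset V, IsFace G F ∧ F ⊆ C ∧ (u : Amb K V) = faceMon K F}

/-- The ideal `Q_i` generated by the monomials `x_F t` for faces `F ∋ i`. -/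
def Qi (i : V) : Ideal (RG K G) :=
  Ideal.span {u : RG K G | ∃ F : Finset V, IsFace G F ∧ i ∈ F ∧ (u : Amb K V) = faceMon K F}

/-- A vertex cover of `G`. -/
def IsVertexCover (C : Finset V) : Prop := ∀ ⦃i j⦄, G.Adj i j → i ∈ C ∨ j ∈ C

/-- A minimal vertex cover of `G`. -/
def IsMinVertexCover (C : Finset V) : Prop :=
  IsVertexCover G C ∧ ∀ C' ⊆ C, IsVertexCover G C' → C' = C

/-- An induced odd cycle of `G`, given by an injective cyclic enumeration of its
vertices such that adjacency holds exactly between consecutive vertices. -/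
def IsInducedOddCycle {V : Type*} (G : SimpleGraph V) (m : ℕ) (c : ZMod m → V) : Prop :=
  3 ≤ m ∧ Odd m ∧ Function.Injective c ∧
    ∀ p q : ZMod m, G.Adj (c p) (c q) ↔ (q = p + 1 ∨ p = q + 1)

/-- The monomial `x^a t^b` of the ambient ring. -/
def monom [Fintype V] (a : V → ℕ) (b : ℕ) : Amb K V :=
  (∏ i, X (some i) ^ a i) * X none ^ b

/-- An element of `R_G` which is a monomial. -/
def IsMonomialElt [Fintype V] (u : RG K G) : Prop :=
  ∃ (a : V → ℕ) (b : ℕ), (u : Amb K V) = monom K a b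

/-- A monomial ideal of `R_G`. -/
def IsMonomialIdeal [Fintype V] (I : Ideal (RG K G)) : Prop :=
  ∃ S : Set (RG K G), (∀ u ∈ S, IsMonomialElt K G u) ∧ I = Ideal.span S

/-- A height one ideal of the domain `R_G`: a nonzero prime all of whose properly
contained primes are zero. -/
def HeightOne (I : Ideal (RG K G)) : Prop :=
  I.IsPrime ∧ I ≠ ⊥ ∧ ∀ J : Ideal (RG K G), J.IsPrime → J < I → J = ⊥

/-- The ideal contains the element `t`. -/
def ContainsT (I : Ideal (RG K G)) : Prop := ∃ u ∈ I, (u : Amb K V) = tGen K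

/-- The canonical ideal of `R_G` (for `R_G` normal): the intersection of all height one
monomial prime ideals. -/
def canonicalIdeal [Fintype V] : Ideal (RG K G) :=
  sInf {P : Ideal (RG K G) | HeightOne K G P ∧ IsMonomialIdeal K G P}

/-- `R_G` is Gorenstein: the canonical ideal (= canonical module) is isomorphic to
`R_G` as an `R_G`-module, equivalently it is a principal ideal, i.e. the canonical
class vanishes. -/
def IsGorensteinToric [Fintype V] : Prop :=
  (canonicalIdeal K G).IsPrincipal

section Aux

variable {V : Type*} [DecidableEq V]

lemma aux_prodX_eq {K : Type*} [Field K] (s : Finset V) (a : V → ℕ) :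
    (∏ i ∈ s, (X (some i) : Amb K V) ^ a i)
      = monomial (∑ i ∈ s, Finsupp.single (some i) (a i)) (1 : K) := by
  classical
  induction s using Finset.induction with
  | empty => simp
  | insert _ _ h ih =>
    rw [Finset.prod_insert h, Finset.sum_insert h, ih, X_pow_eq_monomial, monomial_mul, one_mul]

def aux_expOf [Fintype V] (a : V → ℕ) (b : ℕ) : Option V →₀ ℕ :=
  (∑ i, Finsupp.single (some i) (a i)) + Finsupp.single none b

lemma aux_monom_eq {K : Type*} [Field K] [Fintype V] (a : V → ℕ) (b : ℕ) :
    monom K a b = monomial (aux_expOf a b) (1 : K) := by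
  rw [show monom K a b = (∏ i, (X (some i) : Amb K V) ^ a i) * X none ^ b from rfl,
    aux_prodX_eq, X_pow_eq_monomial, monomial_mul, one_mul, aux_expOf]

lemma aux_expOf_none [Fintype V] (a : V → ℕ) (b : ℕ) :
    aux_expOf a b none = b := by
  simp [aux_expOf, Finsupp.single_apply, Finsupp.finset_sum_apply]

lemma aux_expOf_some [Fintype V] (a : V → ℕ) (b : ℕ) (i : V) :
    aux_expOf a b (some i) = a i := by
  simp [aux_expOf, Finsupp.single_apply, Finsupp.finset_sum_apply]

def aux_balanced (K : Type*) [Field K] (V : Type*) [Fintype V] : Subalgebra K (Amb K V) where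
  carrier := {f : Amb K V | ∀ d ∈ f.support, (∑ i, d (some i)) ≤ 2 * d none}
  mul_mem' := by
    classical
    intro f g hf hg d hd
    obtain ⟨d1, h1, d2, h2, rfl⟩ := Finset.mem_add.1 (MvPolynomial.support_mul _ _ hd)
    simp only [Finsupp.add_apply, Finset.sum_add_distrib, Nat.mul_add]
    exact Nat.add_le_add (hf _ h1) (hg _ h2)
  add_mem' := by
    classical
    intro f g hf hg d hd
    rcases Finset.mem_union.1 (MvPolynomial.support_add hd) with h | h
    · exact hf _ h
    · exact hg _ h
  algebraMap_mem' := by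
    classical
    intro c d hd
    have hd0 : d = 0 := by
      by_contra h
      apply MvPolynomial.mem_support_iff.1 hd
      rw [MvPolynomial.algebraMap_eq, MvPolynomial.coeff_C]
      exact if_neg (fun hh => h hh.symm)
    simp [hd0]
  one_mem' := by
    classical
    intro d hd
    have hd0 : d = 0 := by
      by_contra h
      apply MvPolynomial.mem_support_iff.1 hd
      rw [MvPolynomial.coeff_one]
      exact if_neg (fun hh => h hh.symm)
    simp [hd0]
  zero_mem' := by simp

lemma aux_X_eq_monomial {K : Type*} [Field K] (v : Option V) :
    (X v : Amb K V) = monomial (Finsupp.single v 1) 1 := by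
  rw [← X_pow_eq_monomial, pow_one]

lemma aux_RG_le {K : Type*} [Field K] [Fintype V] (G : SimpleGraph V) :
    RG K G ≤ aux_balanced K V := by
  classical
  apply Algebra.adjoin_le
  intro p hp
  simp only [Set.mem_union, Set.mem_singleton_iff, Set.mem_range, Set.mem_setOf_eq] at hp
  obtain (rfl | ⟨i, rfl⟩) | ⟨i, j, hadj, rfl⟩ := hp
  · intro d hd
    rw [tGen, aux_X_eq_monomial, support_monomial] at hd
    simp only [one_ne_zero, if_false, Finset.mem_singleton] at hd
    subst hd
    simp [Finsupp.single_apply]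
  · intro d hd
    rw [vGen, aux_X_eq_monomial, aux_X_eq_monomial, monomial_mul, one_mul,
      support_monomial] at hd
    simp only [one_ne_zero, if_false, Finset.mem_singleton] at hd
    subst hd
    simp [Finsupp.add_apply, Finsupp.single_apply, Finset.sum_add_distrib]
  · intro d hd
    rw [eGen, aux_X_eq_monomial, aux_X_eq_monomial, aux_X_eq_monomial, monomial_mul,
      monomial_mul, one_mul, support_monomial] at hd
    simp only [mul_one, one_mul, one_ne_zero, if_false, Finset.mem_singleton] at hd
    subst hd
    simp [Finsupp.add_apply, Finsupp.single_apply, Finset.sum_add_distrib]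

lemma aux_dvd_of_mem_Qi {K : Type*} [Field K] (G : SimpleGraph V) (i : V) (u : RG K G)
    (hu : u ∈ Qi K G i) : (X (some i) : Amb K V) ∣ (u : Amb K V) := by
  rw [← Ideal.mem_span_singleton]
  have hle : Qi K G i ≤ Ideal.comap ((RG K G).val.toRingHom)
      (Ideal.span {(X (some i) : Amb K V)}) := by
    apply Ideal.span_le.2
    rintro u' ⟨F, _, hiF, hcoe⟩
    simp only [SetLike.mem_coe, Ideal.mem_comap]
    show (u' : Amb K V) ∈ _
    rw [hcoe, Ideal.mem_span_singleton, faceMon]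
    exact dvd_mul_of_dvd_left (Finset.dvd_prod_of_mem _ hiF) _
  exact hle hu

lemma aux_interleave {M : Type*} [CommMonoid M] (g : ℕ → M) (n : ℕ) :
    ∏ j ∈ Finset.range n, (g (2 * j + 1) * g (2 * j + 2))
      = ∏ m ∈ Finset.range (2 * n), g (m + 1) := by
  induction n with
  | zero => simp
  | succ n ih =>
    have h2 : 2 * (n + 1) = (2 * n + 1) + 1 := by ring
    rw [Finset.prod_range_succ, ih, h2, Finset.prod_range_succ, Finset.prod_range_succ,
      ← mul_assoc]

end Aux

/-- Let `G = C_k` be the odd cycle with `k = 2ℓ+1` vertices.  Any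
monomial `x^a t^b ∈ R_G` lying in `⋂ i, Q_i` satisfies `a i ≥ 1` for all `i` and
`b ≥ ℓ+1`; moreover this bound is attained (by `w₀ = x₁⋯x_k t^{ℓ+1}`), so the initial
degree of `⋂ i, Q_i` is `ℓ+1`. -/
theorem stmt14 (K : Type*) [Field K] (ℓ : ℕ) (hl : 1 ≤ ℓ) :
    (∀ u : RG K (cycleG (2 * ℓ + 1)), u ∈ ⨅ i, Qi K (cycleG (2 * ℓ + 1)) i →
      ∀ (a : ZMod (2 * ℓ + 1) → ℕ) (b : ℕ),
        (u : Amb K (ZMod (2 * ℓ + 1))) = monom K a b →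
          (∀ i, 1 ≤ a i) ∧ ℓ + 1 ≤ b) ∧
    ∃ u : RG K (cycleG (2 * ℓ + 1)), u ∈ ⨅ i, Qi K (cycleG (2 * ℓ + 1)) i ∧
      (u : Amb K (ZMod (2 * ℓ + 1))) = monom K (fun _ => 1) (ℓ + 1) := by
  classical
  haveI : Fact (1 < 2 * ℓ + 1) := ⟨by omega⟩
  constructor
  · intro u hu a b hcoe
    have h1 : ∀ i, 1 ≤ a i := by
      intro i
      have hqi : u ∈ Qi K (cycleG (2 * ℓ + 1)) i := Ideal.mem_iInf.1 hu i
      have hdvd := aux_dvd_of_mem_Qi _ i u hqi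
      rw [hcoe, aux_monom_eq, X_dvd_monomial] at hdvd
      rcases hdvd with h | h
      · exact absurd h one_ne_zero
      · rw [aux_expOf_some] at h; omega
    refine ⟨h1, ?_⟩
    have hsupp : aux_expOf a b ∈ (u : Amb K (ZMod (2 * ℓ + 1))).support := by
      rw [hcoe, aux_monom_eq, support_monomial]
      simp
    have hball : (u : Amb K (ZMod (2 * ℓ + 1))) ∈ aux_balanced K (ZMod (2 * ℓ + 1)) :=
      aux_RG_le _ u.2
    have h3 := hball (aux_expOf a b) hsupp
    simp only [aux_expOf_some, aux_expOf_none] at h3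
    have h4 : (Finset.univ : Finset (ZMod (2 * ℓ + 1))).card • 1 ≤ ∑ i, a i :=
      Finset.card_nsmul_le_sum _ _ _ (fun i _ => h1 i)
    rw [Finset.card_univ, ZMod.card, smul_eq_mul, mul_one] at h4
    have h5 := le_trans h4 h3
    omega
  · have hadj : ∀ v : ZMod (2 * ℓ + 1), (cycleG (2 * ℓ + 1)).Adj v (v + 1) := by
      intro v
      refine ⟨fun h => ?_, Or.inl rfl⟩
      exact one_ne_zero (left_eq_add.1 h)
    have hadj2 : ∀ (i : ZMod (2 * ℓ + 1)) (j : ℕ),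
        (cycleG (2 * ℓ + 1)).Adj (i + ((2 * j + 1 : ℕ) : ZMod (2 * ℓ + 1)))
          (i + ((2 * j + 2 : ℕ) : ZMod (2 * ℓ + 1))) := by
      intro i j
      have hc : (((2 * j + 2 : ℕ) : ZMod (2 * ℓ + 1)))
          = ((2 * j + 1 : ℕ) : ZMod (2 * ℓ + 1)) + 1 := by push_cast; ring
      rw [hc, ← add_assoc]
      exact hadj _
    have hvmem : ∀ i : ZMod (2 * ℓ + 1), vGen K i ∈ RG K (cycleG (2 * ℓ + 1)) :=
      fun i => Algebra.subset_adjoin (Or.inl (Or.inr ⟨i, rfl⟩))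
    have hemem : ∀ i j, (cycleG (2 * ℓ + 1)).Adj i j →
        eGen K i j ∈ RG K (cycleG (2 * ℓ + 1)) :=
      fun i j h => Algebra.subset_adjoin (Or.inr ⟨i, j, h, rfl⟩)
    have hE : ∀ i : ZMod (2 * ℓ + 1),
        (∏ j ∈ Finset.range ℓ, eGen K (i + ((2 * j + 1 : ℕ) : ZMod (2 * ℓ + 1)))
            (i + ((2 * j + 2 : ℕ) : ZMod (2 * ℓ + 1)))) * vGen K i
          = monom K (fun _ => (1 : ℕ)) (ℓ + 1) := by
      intro i
      simp only [eGen, vGen]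
      rw [Finset.prod_mul_distrib, Finset.prod_const, Finset.card_range,
        aux_interleave
          (fun m => (X (some (i + (m : ZMod (2 * ℓ + 1)))) : Amb K (ZMod (2 * ℓ + 1)))) ℓ]
      have hstep : (∏ m ∈ Finset.range (2 * ℓ),
            (X (some (i + ((m + 1 : ℕ) : ZMod (2 * ℓ + 1)))) : Amb K (ZMod (2 * ℓ + 1))))
            * X (some i)
          = ∏ m ∈ Finset.range (2 * ℓ + 1),
            (X (some (i + ((m : ℕ) : ZMod (2 * ℓ + 1)))) : Amb K (ZMod (2 * ℓ + 1))) := by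
        rw [Finset.prod_range_succ']
        norm_num
      have hbij : (∏ m ∈ Finset.range (2 * ℓ + 1),
            (X (some (i + ((m : ℕ) : ZMod (2 * ℓ + 1)))) : Amb K (ZMod (2 * ℓ + 1))))
          = ∏ v : ZMod (2 * ℓ + 1), X (some v) := by
        refine Finset.prod_nbij' (fun m => i + (m : ZMod (2 * ℓ + 1)))
          (fun v => ((v - i : ZMod (2 * ℓ + 1)).val))
          (fun m _ => Finset.mem_univ _)
          (fun v _ => Finset.mem_range.2 (ZMod.val_lt _))
          (fun m hm => ?_) (fun v _ => by simp [ZMod.natCast_zmod_val]) (fun m _ => rfl)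
        rw [Finset.mem_range] at hm
        simp [ZMod.val_cast_of_lt hm]
      have hring : ∀ (P A B : Amb K (ZMod (2 * ℓ + 1))),
          P * B ^ ℓ * (A * B) = P * A * B ^ (ℓ + 1) := by intros; ring
      rw [hring, hstep, hbij]
      simp [monom]
    have hw0 : monom K (fun _ => (1 : ℕ)) (ℓ + 1) ∈ RG K (cycleG (2 * ℓ + 1)) := by
      rw [← hE 0]
      exact mul_mem (prod_mem fun j _ => hemem _ _ (hadj2 0 j)) (hvmem 0)
    refine ⟨⟨monom K (fun _ => (1 : ℕ)) (ℓ + 1), hw0⟩, ?_, rfl⟩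
    rw [Ideal.mem_iInf]
    intro i
    have hgen : (⟨vGen K i, hvmem i⟩ : RG K (cycleG (2 * ℓ + 1)))
        ∈ Qi K (cycleG (2 * ℓ + 1)) i :=
      Ideal.subset_span ⟨{i}, Or.inr (Or.inl ⟨i, rfl⟩), Finset.mem_singleton_self i,
        by simp [faceMon, vGen]⟩
    have heq : (⟨monom K (fun _ => (1 : ℕ)) (ℓ + 1), hw0⟩ : RG K (cycleG (2 * ℓ + 1)))
        = (⟨∏ j ∈ Finset.range ℓ, eGen K (i + ((2 * j + 1 : ℕ) : ZMod (2 * ℓ + 1)))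
              (i + ((2 * j + 2 : ℕ) : ZMod (2 * ℓ + 1))),
            prod_mem fun j _ => hemem _ _ (hadj2 i j)⟩
          * ⟨vGen K i, hvmem i⟩) := Subtype.ext (hE i).symm
    rw [heq]
    exact Ideal.mul_mem_left _ _ hgen
end
end

section
/- Let $G = C_k$ be the odd cycle with $k = 2\ell+1$ vertices. The only monomials of $t$-degree $\ell+1$ in $\bigcap_{i=1}^k Q_i \subseteq R_G$ are $w_0 = (x_1x_2\cdots x_k)t^{\ell+1}$ and $w_i = (x_1\cdots x_{i-1}x_i^2x_{i+1}\cdots x_k)t^{\ell+1}$ for $i=1,\dots,k$. -/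
open MvPolynomial

set_option synthInstance.maxHeartbeats 1000000

noncomputable section

variable (K : Type*) [Field K] {V : Type*} [DecidableEq V]

variable (G : SimpleGraph V)

-- ====== auxiliary development ======
namespace Stmt15Aux

set_option linter.unusedSectionVars false

open Finset

variable {K : Type*} [Field K] {V : Type*} [DecidableEq V] [Fintype V]

/-- indicator of a single vertex -/
def ind (i : V) : V → ℕ := fun v => if v = i then 1 else 0

/-- indicator of a finset -/
def indF (F : Finset V) : V → ℕ := fun v => if v ∈ F then 1 else 0

/-- the exponent finsupp of `monom a b` -/
def expv (a : V → ℕ) (b : ℕ) : (Option V) →₀ ℕ :=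
  Finsupp.equivFunOnFinite.symm (fun o => o.elim b a)

@[simp] lemma expv_none (a : V → ℕ) (b : ℕ) : expv a b none = b := rfl

@[simp] lemma expv_some (a : V → ℕ) (b : ℕ) (v : V) : expv a b (some v) = a v := rfl

lemma expv_add (a a' : V → ℕ) (b b' : ℕ) :
    expv a b + expv a' b' = expv (a + a') (b + b') := by
  ext o; cases o <;> simp

lemma monom_eq_monomial (a : V → ℕ) (b : ℕ) :
    monom K a b = monomial (expv a b) (1 : K) := by
  rw [monomial_eq, Finsupp.prod_pow, Fintype.prod_option, map_one, one_mul, monom]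
  simp [mul_comm]

lemma monom_mul (a a' : V → ℕ) (b b' : ℕ) :
    monom K a b * monom K a' b' = monom K (a + a') (b + b') := by
  rw [monom_eq_monomial, monom_eq_monomial, monom_eq_monomial, monomial_mul, one_mul,
    expv_add]

lemma prod_X_pow_ind (i : V) :
    (∏ v : V, (X (some v) : Amb K V) ^ ind i v) = X (some i) := by
  rw [show (fun v => (X (some v) : Amb K V) ^ ind i v)
      = fun v => if v = i then X (some v) else 1 by
    funext v; unfold ind; split <;> simp]
  rw [Finset.prod_ite_eq' univ i]
  simp

lemma vGen_eq (i : V) : vGen K i = monom K (ind i) 1 := by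
  rw [monom, prod_X_pow_ind, pow_one, vGen]

lemma eGen_eq (i j : V) : eGen K i j = monom K (ind i + ind j) 1 := by
  rw [monom]
  have : (fun v => (X (some v) : Amb K V) ^ (ind i + ind j) v)
      = fun v => (X (some v)) ^ ind i v * (X (some v)) ^ ind j v := by
    funext v; rw [Pi.add_apply, pow_add]
  rw [show (∏ v : V, (X (some v) : Amb K V) ^ (ind i + ind j) v)
      = ∏ v : V, (X (some v)) ^ ind i v * (X (some v)) ^ ind j v from Finset.prod_congr rfl
        (fun v _ => by rw [Pi.add_apply, pow_add]),
    Finset.prod_mul_distrib, prod_X_pow_ind, prod_X_pow_ind, pow_one, eGen]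

lemma faceMon_eq (F : Finset V) : faceMon K F = monom K (indF F) 1 := by
  rw [monom, pow_one, faceMon]
  congr 1
  rw [show (∏ v : V, (X (some v) : Amb K V) ^ indF F v)
      = ∏ v : V, (if v ∈ F then X (some v) else 1) from Finset.prod_congr rfl
        (fun v _ => by unfold indF; split <;> simp),
    Finset.prod_ite_mem, univ_inter]

lemma prod_monom {ι : Type*} (S : Finset ι) (f : ι → V → ℕ) :
    (∏ s ∈ S, monom K (f s) 1) = monom K (∑ s ∈ S, f s) S.card := by
  classical
  induction S using Finset.induction_on with
  | empty =>
      simp only [Finset.prod_empty, Finset.sum_empty, Finset.card_empty]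
      rw [monom]; simp
  | insert x s hx ih =>
      rw [Finset.prod_insert hx, Finset.sum_insert hx, Finset.card_insert_of_notMem hx, ih,
        monom_mul]
      congr 1
      omega


variable (G : SimpleGraph V)

/-- `d` is the exponent vector of a product of `d none` face monomials. -/
def Good (d : Option V →₀ ℕ) : Prop :=
  ∃ L : Multiset (Finset V), (∀ F ∈ L, IsFace G F) ∧ Multiset.card L = d none ∧
    ∀ v : V, d (some v) = (L.map fun F => if v ∈ F then 1 else 0).sum

/-- as `Good`, with moreover some face containing `i`. -/
def GoodAt (i : V) (d : Option V →₀ ℕ) : Prop :=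
  ∃ L : Multiset (Finset V), (∀ F ∈ L, IsFace G F) ∧ (∃ F ∈ L, i ∈ F) ∧
    Multiset.card L = d none ∧
    ∀ v : V, d (some v) = (L.map fun F => if v ∈ F then 1 else 0).sum

lemma good_zero : Good G (0 : Option V →₀ ℕ) :=
  ⟨0, by simp, by simp, by simp⟩

lemma good_add {d e : Option V →₀ ℕ} (hd : Good G d) (he : Good G e) : Good G (d + e) := by
  obtain ⟨L1, h1, c1, s1⟩ := hd
  obtain ⟨L2, h2, c2, s2⟩ := he
  refine ⟨L1 + L2, ?_, ?_, ?_⟩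
  · intro F hF; rcases Multiset.mem_add.mp hF with h | h
    · exact h1 F h
    · exact h2 F h
  · simp [c1, c2]
  · intro v; simp [s1 v, s2 v]

lemma goodAt_of_good_add {i : V} {d e : Option V →₀ ℕ} (hd : Good G d) (he : GoodAt G i e) :
    GoodAt G i (d + e) := by
  obtain ⟨L1, h1, c1, s1⟩ := hd
  obtain ⟨L2, h2, hF2, c2, s2⟩ := he
  refine ⟨L1 + L2, ?_, ?_, ?_, ?_⟩
  · intro F hF; rcases Multiset.mem_add.mp hF with h | h
    · exact h1 F h
    · exact h2 F h
  · obtain ⟨F, hFL, hiF⟩ := hF2; exact ⟨F, Multiset.mem_add.mpr (Or.inr hFL), hiF⟩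
  · simp [c1, c2]
  · intro v; simp [s1 v, s2 v]

lemma good_expv_indF {F : Finset V} (hF : IsFace G F) : Good G (expv (indF F) 1) := by
  refine ⟨{F}, by simpa using hF, by simp, ?_⟩
  intro v; simp [indF]

/-- elements of `R_G` have all exponent vectors `Good`. -/
lemma good_of_mem_RG {u : Amb K V} (hu : u ∈ RG K G) :
    ∀ d ∈ u.support, Good G d := by
  classical
  induction hu using Algebra.adjoin_induction with
  | mem x hx =>
      rcases hx with ((h | h) | h)
      · -- tGen
        rcases h with rfl
        intro d hd
        rw [tGen] at hd
        have := MvPolynomial.support_X (R := K) (n := (none : Option V))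
        rw [this] at hd
        simp only [Finset.mem_singleton] at hd
        subst hd
        exact ⟨{∅}, by simp [IsFace], by simp, fun v => by simp [Finsupp.single_apply]⟩
      · -- vGen
        obtain ⟨i, rfl⟩ := h
        intro d hd
        rw [vGen_eq, monom_eq_monomial, support_monomial] at hd
        simp only [one_ne_zero, if_false, Finset.mem_singleton] at hd
        subst hd
        refine ⟨{({i} : Finset V)}, by simp [IsFace], by simp, fun v => by simp [ind]⟩
      · -- eGen
        obtain ⟨i, j, hij, rfl⟩ := h
        intro d hd
        rw [eGen_eq, monom_eq_monomial, support_monomial] at hd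
        simp only [one_ne_zero, if_false, Finset.mem_singleton] at hd
        subst hd
        refine ⟨{({i, j} : Finset V)}, ?_, by simp, fun v => ?_⟩
        · intro F hF; rw [Multiset.mem_singleton] at hF; subst hF
          exact Or.inr (Or.inr ⟨i, j, hij, rfl⟩)
        · have hne : i ≠ j := hij.ne
          simp only [expv_some, Pi.add_apply, ind, Multiset.map_singleton,
            Multiset.sum_singleton, Finset.mem_insert, Finset.mem_singleton]
          by_cases h1 : v = i <;> by_cases h2 : v = j <;> simp_all
  | algebraMap r =>
      intro d hd
      have : d ∈ (C (σ := Option V) r).support := hd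
      by_cases hr : r = 0
      · subst hr; simp at this
      · rw [show (C (σ := Option V) r : Amb K V) = monomial 0 r from by
            rw [monomial_zero'], support_monomial] at this
        simp only [hr, if_false, Finset.mem_singleton] at this
        subst this
        exact good_zero G
  | add x y hx hy ihx ihy =>
      intro d hd
      rcases Finset.mem_union.mp (MvPolynomial.support_add hd) with h | h
      · exact ihx d h
      · exact ihy d h
  | mul x y hx hy ihx ihy =>
      intro d hd
      obtain ⟨d1, h1, d2, h2, rfl⟩ := Finset.mem_add.mp (MvPolynomial.support_mul x y hd)
      exact good_add G (ihx d1 h1) (ihy d2 h2)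

/-- elements of `Q_i` have all exponent vectors `GoodAt i`. -/
lemma goodAt_of_mem_Qi {i : V} {u : RG K G} (hu : u ∈ Qi K G i) :
    ∀ d ∈ (u : Amb K V).support, GoodAt G i d := by
  classical
  induction hu using Submodule.span_induction with
  | mem x hx =>
      obtain ⟨F, hF, hiF, hx⟩ := hx
      intro d hd
      rw [hx, faceMon_eq, monom_eq_monomial, support_monomial] at hd
      simp only [one_ne_zero, if_false, Finset.mem_singleton] at hd
      subst hd
      exact ⟨{F}, by simpa using hF, ⟨F, by simp, hiF⟩, by simp, fun v => by simp [indF]⟩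
  | zero => intro d hd; simp at hd
  | add x y hx hy ihx ihy =>
      intro d hd
      have : ((x : Amb K V) + (y : Amb K V)).support ⊆ _ := MvPolynomial.support_add
      rcases Finset.mem_union.mp (this hd) with h | h
      · exact ihx d h
      · exact ihy d h
  | smul r x hx ih =>
      intro d hd
      have hcoe : ((r • x : RG K G) : Amb K V) = (r : Amb K V) * (x : Amb K V) := rfl
      rw [hcoe] at hd
      obtain ⟨d1, h1, d2, h2, rfl⟩ := Finset.mem_add.mp
        (MvPolynomial.support_mul (r : Amb K V) (x : Amb K V) hd)
      exact goodAt_of_good_add G (good_of_mem_RG G r.2 d1 h1) (ih d2 h2)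


lemma sum_indicator_multiset (L : Multiset (Finset V)) :
    ∑ v : V, (L.map fun F => if v ∈ F then 1 else 0).sum = (L.map Finset.card).sum := by
  induction L using Multiset.induction_on with
  | empty => simp
  | cons F L ih =>
      simp only [Multiset.map_cons, Multiset.sum_cons]
      rw [Finset.sum_add_distrib, ih]
      congr 1
      rw [Finset.sum_ite_mem, Finset.univ_inter, Finset.card_eq_sum_ones]

lemma face_card_le {F : Finset V} (hF : IsFace G F) : F.card ≤ 2 := by
  rcases hF with h | ⟨i, h⟩ | ⟨i, j, _, h⟩ <;> subst h
  · simp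
  · simp
  · exact le_trans (Finset.card_insert_le _ _) (by simp)

lemma sum_le_of_good {a : V → ℕ} {b : ℕ} (hg : Good G (expv a b)) :
    ∑ v : V, a v ≤ 2 * b := by
  obtain ⟨L, hface, hcard, hsum⟩ := hg
  have h1 : ∑ v : V, a v = (L.map Finset.card).sum := by
    rw [← sum_indicator_multiset]
    exact Finset.sum_congr rfl fun v _ => by rw [← hsum v, expv_some]
  rw [expv_none] at hcard
  have h2 : (L.map Finset.card).sum ≤ Multiset.card (L.map Finset.card) • 2 :=
    Multiset.sum_le_card_nsmul _ 2 (fun x hx => by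
      obtain ⟨F, hF, rfl⟩ := Multiset.mem_map.mp hx
      exact face_card_le G (hface F hF))
  rw [Multiset.card_map, hcard, smul_eq_mul, mul_comm] at h2
  omega

lemma one_le_of_goodAt {i : V} {a : V → ℕ} {b : ℕ} (hg : GoodAt G i (expv a b)) :
    1 ≤ a i := by
  obtain ⟨L, _, ⟨F, hFL, hiF⟩, _, hsum⟩ := hg
  have h1 := hsum i
  rw [expv_some] at h1
  have hmem : (1 : ℕ) ∈ L.map (fun F => if i ∈ F then 1 else 0) :=
    Multiset.mem_map.mpr ⟨F, hFL, by simp [hiF]⟩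
  have := Multiset.single_le_sum (fun x _ => Nat.zero_le x) 1 hmem
  omega

lemma classify {a : V → ℕ} (h1 : ∀ v, 1 ≤ a v) (h2 : ∑ v : V, a v ≤ Fintype.card V + 1) :
    (∀ v, a v = 1) ∨ ∃ m, ∀ v, a v = if v = m then 2 else 1 := by
  by_cases hall : ∀ v, a v = 1
  · exact Or.inl hall
  · push_neg at hall
    obtain ⟨m, hm⟩ := hall
    have hm2 : 2 ≤ a m := by have := h1 m; omega
    have hEm : ((univ : Finset V).erase m).card ≤ ∑ x ∈ (univ : Finset V).erase m, a x := by
      have := Finset.card_nsmul_le_sum ((univ : Finset V).erase m) a 1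
        (fun x _ => h1 x)
      simpa using this
    have hsplit : a m + ∑ x ∈ (univ : Finset V).erase m, a x = ∑ v : V, a v :=
      Finset.add_sum_erase _ a (Finset.mem_univ m)
    have hcard : ((univ : Finset V).erase m).card = Fintype.card V - 1 := by
      rw [Finset.card_erase_of_mem (Finset.mem_univ m), Finset.card_univ]
    have hcpos : 1 ≤ Fintype.card V := by
      have : m ∈ (univ : Finset V) := Finset.mem_univ m
      have := Finset.card_pos.mpr ⟨m, this⟩
      rw [Finset.card_univ] at this; exact this
    refine Or.inr ⟨m, fun v => ?_⟩
    by_cases hv : v = m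
    · subst hv
      rw [if_pos rfl]
      omega
    · rw [if_neg hv]
      have hvmem : v ∈ (univ : Finset V).erase m := Finset.mem_erase.mpr ⟨hv, Finset.mem_univ v⟩
      have hsplit2 : a v + ∑ x ∈ ((univ : Finset V).erase m).erase v, a x
          = ∑ x ∈ (univ : Finset V).erase m, a x :=
        Finset.add_sum_erase _ a hvmem
      have hE2 : (((univ : Finset V).erase m).erase v).card
          ≤ ∑ x ∈ ((univ : Finset V).erase m).erase v, a x := by
        have := Finset.card_nsmul_le_sum (((univ : Finset V).erase m).erase v) a 1
          (fun x _ => h1 x)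
        simpa using this
      have hcard2 : (((univ : Finset V).erase m).erase v).card = Fintype.card V - 2 := by
        rw [Finset.card_erase_of_mem hvmem, hcard]; omega
      have h1v := h1 v
      omega

lemma sum_ind_zmod (k : ℕ) [NeZero k] (i v : ZMod k) :
    ∑ j ∈ Finset.range k, ind (i + (j : ZMod k)) v = 1 := by
  have hrw : ∀ j ∈ Finset.range k, ind (i + (j : ZMod k)) v
      = if j = (v - i).val then 1 else 0 := by
    intro j hj
    rw [Finset.mem_range] at hj
    unfold ind
    by_cases h : j = (v - i).val
    · subst h
      rw [if_pos rfl, if_pos]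
      rw [ZMod.natCast_rightInverse (v - i)]
      ring
    · rw [if_neg h, if_neg]
      intro hv
      apply h
      have : v - i = (j : ZMod k) := by rw [hv]; ring
      rw [this, ZMod.val_cast_of_lt hj]
  rw [Finset.sum_congr rfl hrw,
    Finset.sum_ite_eq' (Finset.range k) ((v - i).val) (fun _ => 1), if_pos]
  exact Finset.mem_range.mpr (ZMod.val_lt _)

lemma sum_range_two_mul (n : ℕ) (f : ℕ → ℕ) :
    ∑ s ∈ Finset.range n, (f (2*s) + f (2*s+1)) = ∑ j ∈ Finset.range (2*n), f j := by
  induction n with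
  | zero => simp
  | succ n ih =>
      rw [Finset.sum_range_succ, ih, show 2*(n+1) = 2*n+1+1 by ring,
        Finset.sum_range_succ, Finset.sum_range_succ]
      ring

lemma sum_range_odd (n : ℕ) (f : ℕ → ℕ) :
    f 0 + ∑ s ∈ Finset.range n, (f (2*s+1) + f (2*s+2)) = ∑ j ∈ Finset.range (2*n+1), f j := by
  induction n with
  | zero => simp
  | succ n ih =>
      have h2 : ∑ j ∈ Finset.range (2*(n+1)+1), f j
          = ∑ j ∈ Finset.range (2*n+1), f j + (f (2*n+1) + f (2*n+2)) := by
        rw [show 2*(n+1)+1 = 2*n+1+1+1 by ring, Finset.sum_range_succ, Finset.sum_range_succ,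
          show 2*n+1+1 = 2*n+2 by ring]
        ring
      rw [Finset.sum_range_succ, ← add_assoc, ih, h2]


lemma vGen_mem (i : V) : vGen K i ∈ RG K G :=
  Algebra.subset_adjoin (Or.inl (Or.inr ⟨i, rfl⟩))

lemma eGen_mem {i j : V} (h : G.Adj i j) : eGen K i j ∈ RG K G :=
  Algebra.subset_adjoin (Or.inr ⟨i, j, h, rfl⟩)

lemma faceMon_single (i : V) : faceMon K ({i} : Finset V) = vGen K i := by
  rw [faceMon, Finset.prod_singleton, vGen]

lemma faceMon_pair {p q : V} (h : p ≠ q) : faceMon K ({p, q} : Finset V) = eGen K p q := by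
  rw [faceMon, Finset.prod_pair h, eGen]

section Cycle

variable {k : ℕ} [Fact (1 < k)]

lemma cycle_adj (x : ZMod k) : (cycleG k).Adj x (x + 1) := by
  refine ⟨?_, Or.inl rfl⟩
  intro h
  have h0 : x + 0 = x + 1 := by rw [add_zero]; exact h
  exact one_ne_zero (add_left_cancel h0).symm

lemma cycle_adj' (x : ZMod k) (n : ℕ) :
    (cycleG k).Adj (x + (n : ZMod k)) (x + ((n + 1 : ℕ) : ZMod k)) := by
  have hc : ((n + 1 : ℕ) : ZMod k) = (n : ZMod k) + 1 := by push_cast; ring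
  rw [hc, ← add_assoc]
  exact cycle_adj _

end Cycle

lemma w0_decomp (K : Type*) [Field K] (ℓ : ℕ) (i : ZMod (2*ℓ+1)) :
    vGen K i * ∏ s ∈ Finset.range ℓ,
        eGen K (i + ((2*s+1 : ℕ) : ZMod (2*ℓ+1))) (i + ((2*s+2 : ℕ) : ZMod (2*ℓ+1)))
      = monom K (fun _ => 1) (ℓ + 1) := by
  rw [vGen_eq,
    Finset.prod_congr rfl (fun s _ => eGen_eq (K := K)
      (i + ((2*s+1 : ℕ) : ZMod (2*ℓ+1))) (i + ((2*s+2 : ℕ) : ZMod (2*ℓ+1)))),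
    prod_monom, Finset.card_range, monom_mul]
  congr 1
  · funext v
    simp only [Pi.add_apply, Finset.sum_apply]
    have key := sum_range_odd ℓ (fun j => ind (i + (j : ZMod (2*ℓ+1))) v)
    simp only [Nat.cast_zero, add_zero] at key
    rw [key, sum_ind_zmod]
  · omega

lemma wm_decomp (K : Type*) [Field K] (ℓ : ℕ) (m : ZMod (2*ℓ+1)) :
    (∏ s ∈ Finset.range (ℓ+1),
        eGen K (m + ((2*s : ℕ) : ZMod (2*ℓ+1))) (m + ((2*s+1 : ℕ) : ZMod (2*ℓ+1))))
      = monom K (fun j => if j = m then 2 else 1) (ℓ + 1) := by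
  rw [Finset.prod_congr rfl (fun s _ => eGen_eq (K := K)
      (m + ((2*s : ℕ) : ZMod (2*ℓ+1))) (m + ((2*s+1 : ℕ) : ZMod (2*ℓ+1)))),
    prod_monom, Finset.card_range]
  congr 1
  funext v
  simp only [Finset.sum_apply, Pi.add_apply]
  have key := sum_range_two_mul (ℓ+1) (fun j => ind (m + (j : ZMod (2*ℓ+1))) v)
  rw [key, show 2*(ℓ+1) = (2*ℓ+1)+1 by ring, Finset.sum_range_succ, sum_ind_zmod,
    ZMod.natCast_self, add_zero]
  unfold ind
  by_cases hv : v = m <;> simp [hv]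

end Stmt15Aux
/-- Let `G = C_k` be the odd cycle with `k = 2ℓ+1` vertices.  The
monomials of `t`-degree `ℓ+1` in `⋂ i, Q_i` are exactly
`w₀ = (x₁⋯x_k) t^{ℓ+1}` and `w_i = (x₁⋯x_{i-1} x_i² x_{i+1}⋯x_k) t^{ℓ+1}`, `i ∈ [k]`. -/
theorem stmt15 (K : Type*) [Field K] (ℓ : ℕ) (hl : 1 ≤ ℓ) :
    ∀ u : RG K (cycleG (2 * ℓ + 1)),
      ((∃ a : ZMod (2 * ℓ + 1) → ℕ,
          (u : Amb K (ZMod (2 * ℓ + 1))) = monom K a (ℓ + 1)) ∧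
        u ∈ ⨅ i, Qi K (cycleG (2 * ℓ + 1)) i) ↔
      ((u : Amb K (ZMod (2 * ℓ + 1))) = monom K (fun _ => 1) (ℓ + 1) ∨
        ∃ i : ZMod (2 * ℓ + 1),
          (u : Amb K (ZMod (2 * ℓ + 1))) =
            monom K (fun j => if j = i then 2 else 1) (ℓ + 1)) := by
  classical
  intro u
  haveI : Fact (1 < 2 * ℓ + 1) := ⟨by omega⟩
  open Stmt15Aux in
  constructor
  · rintro ⟨⟨a, ha⟩, hQ⟩
    have hsupp : Stmt15Aux.expv a (ℓ+1) ∈ (u : Amb K (ZMod (2*ℓ+1))).support := by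
      rw [ha, Stmt15Aux.monom_eq_monomial, support_monomial]
      simp
    have hgood := Stmt15Aux.good_of_mem_RG (cycleG (2*ℓ+1)) u.2 _ hsupp
    have hle := Stmt15Aux.sum_le_of_good (cycleG (2*ℓ+1)) hgood
    have hge : ∀ i, 1 ≤ a i := fun i =>
      Stmt15Aux.one_le_of_goodAt (cycleG (2*ℓ+1))
        (Stmt15Aux.goodAt_of_mem_Qi (cycleG (2*ℓ+1)) (Ideal.mem_iInf.mp hQ i) _ hsupp)
    have hbound : ∑ v : ZMod (2*ℓ+1), a v ≤ Fintype.card (ZMod (2*ℓ+1)) + 1 := by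
      rw [ZMod.card]; omega
    rcases Stmt15Aux.classify hge hbound with h | ⟨m, hm⟩
    · left
      rw [ha]
      have : a = fun _ => 1 := funext h
      rw [this]
    · right
      refine ⟨m, ?_⟩
      rw [ha]
      have : a = fun j => if j = m then 2 else 1 := funext hm
      rw [this]
  · rintro (h | ⟨m, h⟩)
    · refine ⟨⟨fun _ => 1, h⟩, Ideal.mem_iInf.mpr fun i => ?_⟩
      have hadj : ∀ s : ℕ, (cycleG (2*ℓ+1)).Adj
          (i + ((2*s+1 : ℕ) : ZMod (2*ℓ+1))) (i + ((2*s+2 : ℕ) : ZMod (2*ℓ+1))) := by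
        intro s
        have := Stmt15Aux.cycle_adj' (k := 2*ℓ+1) i (2*s+1)
        rwa [show 2*s+1+1 = 2*s+2 by ring] at this
      set r : RG K (cycleG (2*ℓ+1)) :=
        ⟨∏ s ∈ Finset.range ℓ,
            eGen K (i + ((2*s+1 : ℕ) : ZMod (2*ℓ+1))) (i + ((2*s+2 : ℕ) : ZMod (2*ℓ+1))),
          prod_mem fun s _ => Stmt15Aux.eGen_mem (cycleG (2*ℓ+1)) (hadj s)⟩ with hr
      set g : RG K (cycleG (2*ℓ+1)) :=
        ⟨vGen K i, Stmt15Aux.vGen_mem (cycleG (2*ℓ+1)) i⟩ with hgdef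
      have hg : g ∈ Qi K (cycleG (2*ℓ+1)) i :=
        Ideal.subset_span ⟨{i}, Or.inr (Or.inl ⟨i, rfl⟩), Finset.mem_singleton_self i,
          (Stmt15Aux.faceMon_single i).symm⟩
      have hu : u = g * r := by
        apply Subtype.ext
        show (u : Amb K (ZMod (2*ℓ+1))) = vGen K i * _
        rw [h, Stmt15Aux.w0_decomp]
      rw [hu]
      exact Ideal.mul_mem_right _ _ hg
    · refine ⟨⟨fun j => if j = m then 2 else 1, h⟩, Ideal.mem_iInf.mpr fun i => ?_⟩
      have hjlt : (i - m).val < 2*ℓ+1 := ZMod.val_lt _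
      have hs0 : (i - m).val / 2 ∈ Finset.range (ℓ+1) := Finset.mem_range.mpr (by omega)
      have hieq : i = m + (((i - m).val : ℕ) : ZMod (2*ℓ+1)) := by
        rw [ZMod.natCast_rightInverse (i - m)]; ring
      have hcase : (i - m).val = 2*((i - m).val/2) ∨ (i - m).val = 2*((i - m).val/2)+1 := by
        omega
      have hadj : ∀ s : ℕ, (cycleG (2*ℓ+1)).Adj
          (m + ((2*s : ℕ) : ZMod (2*ℓ+1))) (m + ((2*s+1 : ℕ) : ZMod (2*ℓ+1))) :=
        fun s => Stmt15Aux.cycle_adj' m (2*s)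
      set s0 := (i - m).val / 2 with hs0def
      set g : RG K (cycleG (2*ℓ+1)) :=
        ⟨eGen K (m + ((2*s0 : ℕ) : ZMod (2*ℓ+1))) (m + ((2*s0+1 : ℕ) : ZMod (2*ℓ+1))),
          Stmt15Aux.eGen_mem (cycleG (2*ℓ+1)) (hadj s0)⟩ with hgdef
      set r : RG K (cycleG (2*ℓ+1)) :=
        ⟨∏ s ∈ (Finset.range (ℓ+1)).erase s0,
            eGen K (m + ((2*s : ℕ) : ZMod (2*ℓ+1))) (m + ((2*s+1 : ℕ) : ZMod (2*ℓ+1))),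
          prod_mem fun s _ => Stmt15Aux.eGen_mem (cycleG (2*ℓ+1)) (hadj s)⟩ with hrdef
      have hg : g ∈ Qi K (cycleG (2*ℓ+1)) i := by
        refine Ideal.subset_span
          ⟨{m + ((2*s0 : ℕ) : ZMod (2*ℓ+1)), m + ((2*s0+1 : ℕ) : ZMod (2*ℓ+1))},
            Or.inr (Or.inr ⟨_, _, hadj s0, rfl⟩), ?_, (Stmt15Aux.faceMon_pair (hadj s0).ne).symm⟩
        rcases hcase with hc | hc
        · have : i = m + ((2*s0 : ℕ) : ZMod (2*ℓ+1)) := by rw [hieq, hc]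
          rw [this]; exact Finset.mem_insert_self _ _
        · have : i = m + ((2*s0+1 : ℕ) : ZMod (2*ℓ+1)) := by rw [hieq, hc]
          rw [this]; exact Finset.mem_insert.mpr (Or.inr (Finset.mem_singleton_self _))
      have hu : u = g * r := by
        apply Subtype.ext
        show (u : Amb K (ZMod (2*ℓ+1))) = eGen K _ _ * _
        rw [h, ← Stmt15Aux.wm_decomp K ℓ m, ← Finset.mul_prod_erase _ _ hs0]
      rw [hu]
      exact Ideal.mul_mem_right _ _ hg
end
end

section
/- Let $G = C_k$ be an odd cycle, $k = 2\ell+1$. Then $w_0 = (x_1\cdots x_k)t^{\ell+1}$ belongs to $P_0 = (t,x_1t,\dots,x_kt)$ and to $P_C$ for every minimal vertex cover $C$ of $G$, while for each $i$, $w_i = (x_1\cdots x_{i-1}x_i^2 x_{i+1}\cdots x_k)t^{\ell+1}$ does not belong to $P_0$. -/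
open MvPolynomial

set_option synthInstance.maxHeartbeats 1000000

noncomputable section

variable (K : Type*) [Field K] {V : Type*} [DecidableEq V]

variable (G : SimpleGraph V)

-- ==================== auxiliary lemmas ====================

open Finset

private lemma natKey {R : Type*} [CommRing R] (g : ℕ → R) (m : ℕ) :
    ∏ r ∈ range (2*m+1), g r = g 0 * ∏ s ∈ range m, (g (2*s+1) * g (2*s+2)) := by
  induction m with
  | zero => simp
  | succ n ih =>
    have h : 2*(n+1)+1 = (2*n+1)+1+1 := by ring
    rw [h, prod_range_succ, prod_range_succ, ih, prod_range_succ]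
    rw [show 2*n+1+1 = 2*n+2 by omega]
    ring

private lemma zmodReindex {k : ℕ} [NeZero k] {R : Type*} [CommRing R]
    (f : ZMod k → R) (j : ZMod k) :
    ∏ i, f i = ∏ r ∈ Finset.range k, f (j + (r : ZMod k)) := by
  refine Finset.prod_nbij' (fun i => (i - j).val) (fun r => j + (r : ZMod k))
    (fun i _ => Finset.mem_range.mpr (ZMod.val_lt _)) (fun r _ => Finset.mem_univ _)
    ?_ ?_ ?_
  · intro i _
    simp [ZMod.natCast_val, ZMod.cast_id]
  · intro r hr
    simp [ZMod.val_cast_of_lt (Finset.mem_range.mp hr)]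
  · intro i _
    congr 1
    simp [ZMod.natCast_val, ZMod.cast_id]

private lemma keyA {ℓ : ℕ} {R : Type*} [CommRing R]
    (f : ZMod (2*ℓ+1) → R) (j : ZMod (2*ℓ+1)) :
    ∏ i, f i = f j * ∏ s ∈ Finset.range ℓ,
      (f (j + ((2*s+1 : ℕ) : ZMod (2*ℓ+1))) * f (j + ((2*s+2 : ℕ) : ZMod (2*ℓ+1)))) := by
  rw [zmodReindex f j, natKey (fun r => f (j + (r : ZMod (2*ℓ+1)))) ℓ]
  simp

private lemma keyB {ℓ : ℕ} (hl : 1 ≤ ℓ) {R : Type*} [CommRing R]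
    (f : ZMod (2*ℓ+1) → R) (j : ZMod (2*ℓ+1)) :
    ∏ i, f i = (f j * f (j + ((1:ℕ) : ZMod (2*ℓ+1)))) *
      (f (j + ((2:ℕ) : ZMod (2*ℓ+1))) * ∏ s ∈ Finset.range (ℓ-1),
      (f (j + ((2*s+3 : ℕ) : ZMod (2*ℓ+1))) * f (j + ((2*s+4 : ℕ) : ZMod (2*ℓ+1))))) := by
  rw [keyA f j]
  obtain ⟨m, rfl⟩ : ∃ m, ℓ = m + 1 := ⟨ℓ - 1, by omega⟩
  rw [Finset.prod_range_succ']
  simp only [Nat.add_sub_cancel]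
  have h1 : ∀ s : ℕ, 2*(s+1)+1 = 2*s+3 := by omega
  have h2 : ∀ s : ℕ, 2*(s+1)+2 = 2*s+4 := by omega
  simp only [h1, h2, Nat.mul_zero, Nat.zero_add]
  ring

-- weight function

def wt {V : Type*} [Fintype V] (σ : Option V →₀ ℕ) : ℤ :=
  2 * (σ none : ℤ) - ∑ i : V, (σ (some i) : ℤ)

private lemma wt_add {V : Type*} [Fintype V] (σ τ : Option V →₀ ℕ) :
    wt (σ + τ) = wt σ + wt τ := by
  simp only [wt, Finsupp.add_apply, Nat.cast_add]
  rw [Finset.sum_add_distrib]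
  ring

private lemma wt_zero {V : Type*} [Fintype V] : wt (0 : Option V →₀ ℕ) = 0 := by
  simp [wt]

private lemma X_eq_monomial {s : Option V} :
    (X s : Amb K V) = monomial (Finsupp.single s 1) 1 := rfl

private lemma tGen_eq : (tGen K : Amb K V) = monomial (Finsupp.single none 1) 1 := rfl

private lemma vGen_eq (i : V) :
    (vGen K i : Amb K V) =
      monomial (Finsupp.single (some i) 1 + Finsupp.single none 1) 1 := by
  rw [vGen, X_eq_monomial, X_eq_monomial, monomial_mul, one_mul]

private lemma eGen_eq (i j : V) :
    (eGen K i j : Amb K V) =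
      monomial (Finsupp.single (some i) 1 + Finsupp.single (some j) 1
        + Finsupp.single none 1) 1 := by
  rw [eGen, X_eq_monomial, X_eq_monomial, X_eq_monomial, monomial_mul, monomial_mul,
    one_mul, one_mul]

private lemma wt_single_none {V : Type*} [Fintype V] (b : ℕ) :
    wt (Finsupp.single (none : Option V) b) = 2 * b := by
  simp [wt, Finsupp.single_apply]

private lemma wt_single_some {V : Type*} [Fintype V] [DecidableEq V] (i : V) (b : ℕ) :
    wt (Finsupp.single (some i : Option V) b) = -b := by
  simp [wt, Finsupp.single_apply]

-- L1: monomials of elements of RG have nonnegative weight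
private lemma RG_wt_nonneg [Fintype V] {p : Amb K V} (hp : p ∈ RG K G) :
    ∀ σ ∈ p.support, 0 ≤ wt σ := by
  classical
  induction hp using Algebra.adjoin_induction with
  | mem x hx =>
    rcases hx with (hx | hx) | hx
    · rcases hx with rfl
      intro σ hσ
      rw [tGen_eq, support_monomial] at hσ
      simp only [one_ne_zero, if_false, Finset.mem_singleton] at hσ
      subst hσ
      rw [wt_single_none]; positivity
    · obtain ⟨i, rfl⟩ := hx
      intro σ hσ
      rw [vGen_eq, support_monomial] at hσ
      simp only [one_ne_zero, if_false, Finset.mem_singleton] at hσ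
      subst hσ
      rw [wt_add, wt_single_none, wt_single_some]
      omega
    · obtain ⟨i, j, _, rfl⟩ := hx
      intro σ hσ
      rw [eGen_eq, support_monomial] at hσ
      simp only [one_ne_zero, if_false, Finset.mem_singleton] at hσ
      subst hσ
      rw [wt_add, wt_add, wt_single_none, wt_single_some, wt_single_some]
      omega
  | algebraMap r =>
    intro σ hσ
    rw [MvPolynomial.algebraMap_eq, MvPolynomial.C_apply, support_monomial] at hσ
    by_cases hr : r = 0 <;> simp [hr] at hσ
    subst hσ
    rw [wt_zero]
  | add x y hx hy ihx ihy =>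
    intro σ hσ
    rcases Finset.mem_union.mp (MvPolynomial.support_add hσ) with h | h
    · exact ihx σ h
    · exact ihy σ h
  | mul x y hx hy ihx ihy =>
    intro σ hσ
    obtain ⟨τ, hτ, ρ, hρ, rfl⟩ := Finset.mem_add.mp (MvPolynomial.support_mul _ _ hσ)
    have := ihx τ hτ
    have := ihy ρ hρ
    rw [wt_add]
    omega

-- L2: monomials of elements of P0 have weight ≥ 1
private lemma P0_wt_pos [Fintype V] {u : RG K G} (hu : u ∈ P0 K G) :
    ∀ σ ∈ (u : Amb K V).support, 1 ≤ wt σ := by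
  classical
  refine Submodule.span_induction ?_ ?_ ?_ ?_ hu
  · rintro x (hx | ⟨i, hx⟩) <;> intro σ hσ <;> rw [hx] at hσ
    · rw [tGen_eq, support_monomial] at hσ
      simp only [one_ne_zero, if_false, Finset.mem_singleton] at hσ
      subst hσ
      rw [wt_single_none]; omega
    · rw [vGen_eq, support_monomial] at hσ
      simp only [one_ne_zero, if_false, Finset.mem_singleton] at hσ
      subst hσ
      rw [wt_add, wt_single_none, wt_single_some]; omega
  · intro σ hσ
    simp at hσ
  · intro x y _ _ ihx ihy σ hσ
    rcases Finset.mem_union.mp (MvPolynomial.support_add hσ) with h | h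
    · exact ihx σ h
    · exact ihy σ h
  · intro r x _ ihx σ hσ
    have hσ' : σ ∈ ((r : Amb K V) * (x : Amb K V)).support := by
      simpa [smul_eq_mul] using hσ
    obtain ⟨τ, hτ, ρ, hρ, rfl⟩ := Finset.mem_add.mp (MvPolynomial.support_mul _ _ hσ')
    have h1 := RG_wt_nonneg K G r.2 τ hτ
    have h2 := ihx ρ hρ
    rw [wt_add]
    omega

private lemma monom_eq_monomial [Fintype V] (a : V → ℕ) (b : ℕ) :
    monom K a b = monomial (Finsupp.equivFunOnFinite.symm (fun o => o.elim b a)) 1 := by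
  rw [monomial_eq, C_1, one_mul,
    Finsupp.prod_fintype _ _ (fun _ => pow_zero _), Fintype.prod_option]
  simp only [Finsupp.coe_equivFunOnFinite_symm, Option.elim]
  rw [monom, mul_comm]

-- every vertex cover of an odd cycle contains two adjacent vertices
private lemma cover_has_edge {ℓ : ℕ} (hl : 1 ≤ ℓ) (C : Finset (ZMod (2*ℓ+1)))
    (hC : IsVertexCover (cycleG (2*ℓ+1)) C) : ∃ j, j ∈ C ∧ j + 1 ∈ C := by
  by_contra hcon
  push_neg at hcon
  haveI : Fact (1 < 2*ℓ+1) := ⟨by omega⟩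
  have hadj : ∀ i : ZMod (2*ℓ+1), (cycleG (2*ℓ+1)).Adj i (i+1) := by
    intro i
    refine ⟨fun h => ?_, Or.inl rfl⟩
    exact one_ne_zero (left_eq_add.mp h)
  have hstep : ∀ i : ZMod (2*ℓ+1), (i + 1 ∈ C ↔ i ∉ C) := by
    intro i
    have h1 := hC (hadj i)
    have h2 := hcon i
    tauto
  have key : ∀ (n : ℕ) (i : ZMod (2*ℓ+1)), i ∈ C → ((i + (n : ZMod (2*ℓ+1))) ∈ C ↔ Even n) := by
    intro n
    induction n with
    | zero => simp
    | succ m ih =>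
      intro i hi
      have h2 := hstep (i + (m : ZMod (2*ℓ+1)))
      have hcast : i + ((m+1 : ℕ) : ZMod (2*ℓ+1)) = (i + (m : ZMod (2*ℓ+1))) + 1 := by
        push_cast; ring
      rw [hcast, h2, ih i hi, Nat.even_add_one]
  obtain ⟨i, hi⟩ : ∃ i, i ∈ C := by
    rcases hC (hadj 0) with h | h
    · exact ⟨0, h⟩
    · exact ⟨0+1, h⟩
  have hk := key (2*ℓ+1) i hi
  rw [ZMod.natCast_self, add_zero] at hk
  have : ¬ Even (2*ℓ+1) := by simp [Nat.even_add_one, Nat.even_mul]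
  tauto



set_option maxHeartbeats 1000000 in
/-- For the odd cycle `G = C_k`, `k = 2ℓ+1`: the monomial
`w₀ = (x₁⋯x_k) t^{ℓ+1}` belongs to `R_G`, to `P₀ = (t, x₁t, …, x_kt)` and to `P_C`
for every minimal vertex cover `C`; while each `w_i = (x₁⋯x_i²⋯x_k) t^{ℓ+1}` does not
belong to `P₀`. -/
theorem stmt16 (K : Type*) [Field K] (ℓ : ℕ) (hl : 1 ≤ ℓ) :
    (∃ u : RG K (cycleG (2 * ℓ + 1)),
      (u : Amb K (ZMod (2 * ℓ + 1))) = monom K (fun _ => 1) (ℓ + 1) ∧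
      u ∈ P0 K (cycleG (2 * ℓ + 1)) ∧
      ∀ C : Finset (ZMod (2 * ℓ + 1)), IsMinVertexCover (cycleG (2 * ℓ + 1)) C →
        u ∈ PC K (cycleG (2 * ℓ + 1)) C) ∧
    ∀ (i : ZMod (2 * ℓ + 1)) (u : RG K (cycleG (2 * ℓ + 1))),
      (u : Amb K (ZMod (2 * ℓ + 1))) = monom K (fun j => if j = i then 2 else 1) (ℓ + 1) →
        u ∉ P0 K (cycleG (2 * ℓ + 1)) := by
  haveI : Fact (1 < 2*ℓ+1) := ⟨by omega⟩
  haveI : NeZero (2*ℓ+1) := ⟨by omega⟩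
  set G : SimpleGraph (ZMod (2*ℓ+1)) := cycleG (2*ℓ+1) with hG
  have hadj : ∀ i : ZMod (2*ℓ+1), G.Adj i (i+1) := by
    intro i
    refine ⟨fun h => ?_, Or.inl rfl⟩
    exact one_ne_zero (left_eq_add.mp h)
  have hvmem : ∀ i, vGen K i ∈ RG K G := fun i =>
    Algebra.subset_adjoin (Or.inl (Or.inr ⟨i, rfl⟩))
  have hemem : ∀ i j, G.Adj i j → eGen K i j ∈ RG K G := fun i j h =>
    Algebra.subset_adjoin (Or.inr ⟨i, j, h, rfl⟩)
  have hadj' : ∀ (j : ZMod (2*ℓ+1)) (a b : ℕ), b = a + 1 →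
      G.Adj (j + (a : ZMod (2*ℓ+1))) (j + (b : ZMod (2*ℓ+1))) := by
    intro j a b hb
    have h := hadj (j + (a : ZMod (2*ℓ+1)))
    have e : j + (a : ZMod (2*ℓ+1)) + 1 = j + (b : ZMod (2*ℓ+1)) := by
      subst hb; push_cast; ring
    rwa [e] at h
  -- the first factorization
  have idA : ∀ j : ZMod (2*ℓ+1),
      monom K (fun _ => (1:ℕ)) (ℓ+1) =
        vGen K j * ∏ s ∈ Finset.range ℓ,
          eGen K (j + ((2*s+1 : ℕ) : ZMod (2*ℓ+1))) (j + ((2*s+2 : ℕ) : ZMod (2*ℓ+1))) := by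
    intro j
    rw [monom]
    simp only [pow_one]
    rw [keyA (fun i => (X (some i) : Amb K (ZMod (2*ℓ+1)))) j]
    simp only [vGen, eGen]
    simp only [Finset.prod_mul_distrib, Finset.prod_const, Finset.card_range]
    ring
  have hEA : ∀ j : ZMod (2*ℓ+1),
      (∏ s ∈ Finset.range ℓ,
        eGen K (j + ((2*s+1 : ℕ) : ZMod (2*ℓ+1))) (j + ((2*s+2 : ℕ) : ZMod (2*ℓ+1))))
        ∈ RG K G := by
    intro j
    exact Subalgebra.prod_mem _ (fun s _ => hemem _ _ (hadj' j _ _ (by omega)))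
  -- the second factorization
  have idB : ∀ j : ZMod (2*ℓ+1),
      monom K (fun _ => (1:ℕ)) (ℓ+1) =
        (vGen K (j + ((2:ℕ) : ZMod (2*ℓ+1))) * ∏ s ∈ Finset.range (ℓ-1),
          eGen K (j + ((2*s+3 : ℕ) : ZMod (2*ℓ+1))) (j + ((2*s+4 : ℕ) : ZMod (2*ℓ+1)))) *
          eGen K j (j+1) := by
    intro j
    rw [monom]
    simp only [pow_one]
    rw [keyB hl (fun i => (X (some i) : Amb K (ZMod (2*ℓ+1)))) j]
    simp only [vGen, eGen, Nat.cast_one]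
    simp only [Finset.prod_mul_distrib, Finset.prod_const, Finset.card_range]
    obtain ⟨m, hm⟩ : ∃ m, ℓ = m + 1 := ⟨ℓ - 1, by omega⟩
    rw [show ℓ - 1 = m by omega, show ℓ + 1 = m + 2 by omega]
    ring
  have hEB : ∀ j : ZMod (2*ℓ+1),
      (vGen K (j + ((2:ℕ) : ZMod (2*ℓ+1))) * ∏ s ∈ Finset.range (ℓ-1),
        eGen K (j + ((2*s+3 : ℕ) : ZMod (2*ℓ+1))) (j + ((2*s+4 : ℕ) : ZMod (2*ℓ+1))))
        ∈ RG K G := by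
    intro j
    exact mul_mem (hvmem _)
      (Subalgebra.prod_mem _ (fun s _ => hemem _ _ (hadj' j _ _ (by omega))))
  have humem : monom K (fun _ => (1:ℕ)) (ℓ+1) ∈ RG K G := by
    rw [idA 0]
    exact mul_mem (hvmem 0) (hEA 0)
  constructor
  · refine ⟨⟨monom K (fun _ => (1:ℕ)) (ℓ+1), humem⟩, rfl, ?_, ?_⟩
    · -- membership in P0
      have heq : (⟨monom K (fun _ => (1:ℕ)) (ℓ+1), humem⟩ : RG K G) =
          (⟨_, hEA 0⟩ : RG K G) * ⟨vGen K 0, hvmem 0⟩ := by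
        apply Subtype.ext
        exact (idA 0).trans (mul_comm _ _)
      rw [heq]
      exact Ideal.mul_mem_left _ _ (Ideal.subset_span (Or.inr ⟨0, rfl⟩))
    · -- membership in PC
      intro C hC
      obtain ⟨j, hj1, hj2⟩ := cover_has_edge hl C hC.1
      have hne : j ≠ j + 1 := fun h => one_ne_zero (left_eq_add.mp h)
      have hface : faceMon K ({j, j+1} : Finset (ZMod (2*ℓ+1))) = eGen K j (j+1) := by
        rw [faceMon, Finset.prod_pair hne]
        rfl
      have heq : (⟨monom K (fun _ => (1:ℕ)) (ℓ+1), humem⟩ : RG K G) =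
          (⟨_, hEB j⟩ : RG K G) * ⟨eGen K j (j+1), hemem _ _ (hadj j)⟩ := by
        apply Subtype.ext
        exact idB j
      rw [heq]
      refine Ideal.mul_mem_left _ _ (Ideal.subset_span ?_)
      exact ⟨{j, j+1}, Or.inr (Or.inr ⟨j, j+1, hadj j, rfl⟩),
        Finset.insert_subset hj1 (Finset.singleton_subset_iff.mpr hj2), hface.symm⟩
  · -- the negative part
    intro i u hu hmem
    classical
    set a : ZMod (2*ℓ+1) → ℕ := fun j => if j = i then 2 else 1 with ha
    set σ : Option (ZMod (2*ℓ+1)) →₀ ℕ :=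
      Finsupp.equivFunOnFinite.symm (fun o => o.elim (ℓ+1) a) with hσdef
    have hσ : σ ∈ (u : Amb K (ZMod (2*ℓ+1))).support := by
      rw [hu, monom_eq_monomial, support_monomial]
      simp [hσdef]
    have hwt := P0_wt_pos K G hmem σ hσ
    have hnone : (σ none : ℤ) = ℓ + 1 := by
      simp [hσdef, Finsupp.coe_equivFunOnFinite_symm]
    have hsum : ∑ j : ZMod (2*ℓ+1), (σ (some j) : ℤ) = 2*ℓ+2 := by
      have h1 : ∀ j : ZMod (2*ℓ+1), (σ (some j) : ℤ) = 1 + (if j = i then 1 else 0) := by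
        intro j
        simp only [hσdef, Finsupp.coe_equivFunOnFinite_symm, Option.elim, ha]
        split <;> norm_num
      rw [Finset.sum_congr rfl (fun j _ => h1 j), Finset.sum_add_distrib,
        Finset.sum_const, Finset.sum_ite_eq' Finset.univ i (fun _ => (1:ℤ))]
      simp [Finset.card_univ, ZMod.card]
      ring
    rw [wt, hnone, hsum] at hwt
    omega

end
end

section
/- Let $G$ be an odd cycle on $k = 2\ell+1$ vertices and suppose the canonical module of $R_G$ equals $\omega_{R_G} = (\bigcap_{C\in\mathcal{C}(G)}P_C)\cap P_0 \cap Q_1\cap\dots\cap Q_k$. Then the minimal $t$-degree $a$ with $(\omega_{R_G})_a \ne 0$ is $\ell+1$, and $\dim_K(\omega_{R_G})_{\ell+1} = 1$; i.e., $R_G$ is pseudo-Gorenstein, with the unique monomial of minimal degree being $(x_1\cdots x_k)t^{\ell+1}$. -/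
open MvPolynomial

set_option synthInstance.maxHeartbeats 1000000

noncomputable section

variable (K : Type*) [Field K] {V : Type*} [DecidableEq V]

variable (G : SimpleGraph V)

/-- The canonical module of `R_{C_k}`:
`ω = (⋂_{C ∈ 𝒞(G)} P_C) ∩ P₀ ∩ Q₁ ∩ ⋯ ∩ Q_k`. -/
def omegaCycle (K : Type*) [Field K] (k : ℕ) : Ideal (RG K (cycleG k)) :=
  (⨅ C ∈ {C : Finset (ZMod k) | IsMinVertexCover (cycleG k) C}, PC K (cycleG k) C) ⊓
    P0 K (cycleG k) ⊓ ⨅ i, Qi K (cycleG k) i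
/-! ### Auxiliary development -/

namespace Stmt17Aux

set_option linter.unusedSectionVars false

variable {K : Type*} [Field K] {V : Type*} [DecidableEq V]

lemma tGen_eq : (tGen K : Amb K V) = monomial (Finsupp.single none 1) 1 := rfl

lemma vGen_eq (i : V) : (vGen K i : Amb K V) =
    monomial (Finsupp.single (some i) 1 + Finsupp.single none 1) 1 := by
  rw [vGen, show (X (some i) : Amb K V) = monomial (Finsupp.single (some i) 1) 1 from rfl,
    show (X (none : Option V) : Amb K V) = monomial (Finsupp.single none 1) 1 from rfl,
    monomial_mul, one_mul]

lemma eGen_eq (i j : V) : (eGen K i j : Amb K V) =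
    monomial (Finsupp.single (some i) 1 + Finsupp.single (some j) 1 + Finsupp.single none 1) 1 := by
  rw [eGen, show (X (some i) : Amb K V) = monomial (Finsupp.single (some i) 1) 1 from rfl,
    show (X (some j) : Amb K V) = monomial (Finsupp.single (some j) 1) 1 from rfl,
    show (X (none : Option V) : Amb K V) = monomial (Finsupp.single none 1) 1 from rfl,
    monomial_mul, monomial_mul, one_mul, mul_one]

lemma prod_monomial {α : Type*} (s : Finset α) (e : α → (Option V →₀ ℕ)) :
    (∏ j ∈ s, (monomial (e j) (1:K) : Amb K V)) = monomial (∑ j ∈ s, e j) 1 := by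
  classical
  induction s using Finset.cons_induction with
  | empty => simp [monomial_zero']
  | cons a s ha ih =>
      rw [Finset.prod_cons, Finset.sum_cons, ih, monomial_mul, one_mul]

/-- The exponent vector of `monom a b`. -/
def mexp [Fintype V] (a : V → ℕ) (b : ℕ) : Option V →₀ ℕ :=
  (∑ i, Finsupp.single (some i) (a i)) + Finsupp.single none b

lemma mexp_some [Fintype V] (a : V → ℕ) (b : ℕ) (i : V) : mexp a b (some i) = a i := by
  simp [mexp, Finsupp.single_apply, Finset.sum_ite_eq]

lemma mexp_none [Fintype V] (a : V → ℕ) (b : ℕ) : mexp a b none = b := by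
  simp [mexp, Finsupp.single_apply]

lemma monom_eq [Fintype V] (a : V → ℕ) (b : ℕ) :
    (monom K a b : Amb K V) = monomial (mexp a b) 1 := by
  have h1 : (∏ i, (X (some i) : Amb K V) ^ a i)
      = monomial (∑ i, Finsupp.single (some i) (a i)) 1 := by
    rw [← prod_monomial]
    exact Finset.prod_congr rfl fun i _ => X_pow_eq_monomial
  rw [monom, mexp, h1, X_pow_eq_monomial, monomial_mul, one_mul]

/-- The exponent vector of `faceMon F`. -/
def fexp [Fintype V] (F : Finset V) : Option V →₀ ℕ :=
  mexp (fun i => if i ∈ F then 1 else 0) 1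

lemma faceMon_eq [Fintype V] (F : Finset V) :
    (faceMon K F : Amb K V) = monomial (fexp F) 1 := by
  rw [fexp, ← monom_eq, monom, faceMon, pow_one]
  congr 1
  rw [← Finset.filter_univ_mem F, Finset.prod_filter]
  refine Finset.prod_congr rfl fun i _ => ?_
  by_cases h : i ∈ F <;> simp [h]


variable {G : SimpleGraph V}

lemma tGen_mem : (tGen K : Amb K V) ∈ RG K G :=
  Algebra.subset_adjoin (Or.inl (Or.inl rfl))

lemma vGen_mem (i : V) : (vGen K i : Amb K V) ∈ RG K G :=
  Algebra.subset_adjoin (Or.inl (Or.inr ⟨i, rfl⟩))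

lemma eGen_mem {i j : V} (h : G.Adj i j) : (eGen K i j : Amb K V) ∈ RG K G :=
  Algebra.subset_adjoin (Or.inr ⟨i, j, h, rfl⟩)

lemma sum_w_single [Fintype V] (w : V → ℕ) (v : V) (n : ℕ) :
    (∑ i, w i * (Finsupp.single (some v) n) (some i)) = w v * n := by
  simp [Finsupp.single_apply]

lemma sum_w_none_single [Fintype V] (w : V → ℕ) (n : ℕ) :
    (∑ i, w i * (Finsupp.single (none : Option V) n) (some i)) = 0 := by
  simp [Finsupp.single_apply]

/-- The key weight bound: if the weight of every generator of `R_G` is bounded by `c`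
times its `t`-degree, then the same holds for every monomial in the support of any
element of `R_G`. -/
lemma support_weight [Fintype V] (w : V → ℕ) (c : ℕ) (hv : ∀ i, w i ≤ c)
    (he : ∀ i j, G.Adj i j → w i + w j ≤ c) {u : Amb K V} (hu : u ∈ RG K G) :
    ∀ m ∈ u.support, (∑ i, w i * m (some i)) ≤ c * m none := by
  have hu' : u ∈ Algebra.adjoin K
      ({tGen K} ∪ Set.range (vGen K (V := V)) ∪ {p | ∃ i j, G.Adj i j ∧ p = eGen K i j}) := hu
  induction hu' using Algebra.adjoin_induction with
  | mem x hx =>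
      intro m hm
      rcases hx with (rfl | ⟨i, rfl⟩) | ⟨i, j, hij, rfl⟩
      · rw [tGen_eq] at hm
        have := support_monomial_subset hm
        rw [Finset.mem_singleton] at this
        subst this
        simp [Finsupp.single_apply]
      · rw [vGen_eq] at hm
        have := support_monomial_subset hm
        rw [Finset.mem_singleton] at this
        subst this
        simp only [Finsupp.add_apply, mul_add, Finset.sum_add_distrib, sum_w_single,
          sum_w_none_single, Finsupp.single_apply]
        simp [hv i]
      · rw [eGen_eq] at hm
        have := support_monomial_subset hm
        rw [Finset.mem_singleton] at this
        subst this
        simp only [Finsupp.add_apply, mul_add, Finset.sum_add_distrib, sum_w_single,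
          sum_w_none_single, Finsupp.single_apply]
        simpa using he i j hij
  | algebraMap r =>
      intro m hm
      have : m ∈ ((monomial 0 r : Amb K V)).support := by
        simpa [MvPolynomial.algebraMap_eq, monomial_zero'] using hm
      have h0 := support_monomial_subset this
      rw [Finset.mem_singleton] at h0
      subst h0
      simp
  | add x y hx hy ihx ihy =>
      intro m hm
      rcases Finset.mem_union.mp (MvPolynomial.support_add hm) with h | h
      · exact ihx hx m h
      · exact ihy hy m h
  | mul x y hx hy ihx ihy =>
      intro m hm
      rcases Finset.mem_add.mp (MvPolynomial.support_mul x y hm) with ⟨m1, hm1, m2, hm2, rfl⟩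
      have := add_le_add (ihx hx m1 hm1) (ihy hy m2 hm2)
      simpa [Finsupp.add_apply, mul_add, Finset.sum_add_distrib] using this

/-- Extraction of a monomial generator from membership in a monomial ideal. -/
lemma exists_gen_of_mem_span [Fintype V] {S : Set (RG K G)}
    (hS : ∀ s ∈ S, ∃ e : Option V →₀ ℕ, (s : Amb K V) = monomial e 1)
    {u : RG K G} (hu : u ∈ Ideal.span S) {m : Option V →₀ ℕ}
    (hm : coeff m (u : Amb K V) ≠ 0) :
    ∃ s ∈ S, ∃ e : Option V →₀ ℕ, (s : Amb K V) = monomial e 1 ∧ e ≤ m ∧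
      ∃ r : Amb K V, r ∈ RG K G ∧ coeff (m - e) r ≠ 0 := by
  rw [Ideal.span, Submodule.mem_span_set] at hu
  obtain ⟨cf, hsupp, hsum⟩ := hu
  have hval : (u : Amb K V) = ∑ s ∈ cf.support, ((cf s : Amb K V) * (s : Amb K V)) := by
    rw [← hsum, Finsupp.sum]
    push_cast
    exact Finset.sum_congr rfl fun s _ => by rw [smul_eq_mul]; push_cast; ring
  rw [hval, coeff_sum] at hm
  obtain ⟨s, hsmem, hne⟩ := Finset.exists_ne_zero_of_sum_ne_zero hm
  have hsS : s ∈ S := hsupp hsmem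
  obtain ⟨e, he⟩ := hS s hsS
  rw [he, coeff_mul_monomial'] at hne
  split at hne
  · refine ⟨s, hsS, e, he, by assumption, (cf s : Amb K V), (cf s).2, ?_⟩
    simpa using hne
  · exact absurd rfl hne

/-! ### The odd cycle -/

variable {ℓ : ℕ}

lemma cast_inj_lt {x y : ℕ} (hx : x < 2*ℓ+1) (hy : y < 2*ℓ+1)
    (h : (x : ZMod (2*ℓ+1)) = y) : x = y := by
  have h2 := congrArg ZMod.val h
  rwa [ZMod.val_cast_of_lt hx, ZMod.val_cast_of_lt hy] at h2

lemma one_ne_zero_z (hl : 1 ≤ ℓ) : (1 : ZMod (2*ℓ+1)) ≠ 0 := by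
  intro h
  have : ((1:ℕ) : ZMod (2*ℓ+1)) = ((0:ℕ) : ZMod (2*ℓ+1)) := by push_cast; exact h
  have := cast_inj_lt (by omega) (by omega) this
  omega

lemma adj_succ (hl : 1 ≤ ℓ) (v : ZMod (2*ℓ+1)) : (cycleG (2*ℓ+1)).Adj v (v+1) := by
  refine ⟨fun h => one_ne_zero_z hl ?_, Or.inl rfl⟩
  have := h.symm
  rwa [add_eq_left] at this

lemma cover_card (hl : 1 ≤ ℓ) {C' : Finset (ZMod (2*ℓ+1))}
    (hC' : IsVertexCover (cycleG (2*ℓ+1)) C') : ℓ + 1 ≤ C'.card := by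
  classical
  set g : ZMod (2*ℓ+1) → ZMod (2*ℓ+1) := fun v => if v ∈ C' then v else v + 1 with hg
  have hmem : ∀ v, g v ∈ C' := by
    intro v
    by_cases h : v ∈ C'
    · simp [hg, h]
    · rcases hC' (adj_succ hl v) with h1 | h1
      · exact absurd h1 h
      · simp [hg, h, h1]
  have hcount := Finset.card_eq_sum_card_fiberwise (fun v (_ : v ∈ Finset.univ) => hmem v)
  have hfib : ∀ b ∈ C', (Finset.univ.filter fun v => g v = b).card ≤ 2 := by
    intro b _
    have hsub : (Finset.univ.filter fun v => g v = b) ⊆ {b, b - 1} := by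
      intro v hv
      rw [Finset.mem_filter] at hv
      by_cases h : v ∈ C'
      · have : v = b := by simpa [hg, h] using hv.2
        simp [this]
      · have h2 : v + 1 = b := by simpa [hg, h] using hv.2
        have : v = b - 1 := by rw [← h2]; ring
        simp [this]
    calc (Finset.univ.filter fun v => g v = b).card ≤ ({b, b-1} : Finset _).card :=
          Finset.card_le_card hsub
      _ ≤ 2 := Finset.card_insert_le _ _ |>.trans (by simp)
  have hle : Fintype.card (ZMod (2*ℓ+1)) ≤ 2 * C'.card := by
    rw [← Finset.card_univ, hcount]
    calc ∑ b ∈ C', (Finset.univ.filter fun v => g v = b).card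
        ≤ ∑ _b ∈ C', 2 := Finset.sum_le_sum hfib
      _ = 2 * C'.card := by rw [Finset.sum_const, smul_eq_mul, mul_comm]
  rw [ZMod.card] at hle
  omega

lemma cover_has_edge (hl : 1 ≤ ℓ) {C : Finset (ZMod (2*ℓ+1))}
    (hC : IsVertexCover (cycleG (2*ℓ+1)) C) :
    ∃ v : ZMod (2*ℓ+1), v ∈ C ∧ v + 1 ∈ C := by
  by_contra hcon
  push_neg at hcon
  have halt : ∀ v : ZMod (2*ℓ+1), (v + 1 ∈ C ↔ v ∉ C) := by
    intro v
    constructor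
    · intro h1 h2; exact hcon v h2 h1
    · intro h2
      rcases hC (adj_succ hl v) with h1 | h1
      · exact absurd h1 h2
      · exact h1
  have key : ∀ n : ℕ, ∀ v : ZMod (2*ℓ+1), (v + (n : ℕ) ∈ C ↔ (Even n ↔ v ∈ C)) := by
    intro n
    induction n with
    | zero => intro v; simp
    | succ n ih =>
        intro v
        have hstep : (v + ((n+1 : ℕ) : ZMod (2*ℓ+1))) = (v + (n:ℕ)) + 1 := by
          push_cast; ring
        rw [hstep, halt (v + (n:ℕ)), ih v, Nat.even_add_one]
        tauto
  have hk := key (2*ℓ+1) 0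
  rw [ZMod.natCast_self, add_zero] at hk
  have heven : ¬ Even (2*ℓ+1) := by simp [Nat.even_iff]
  tauto

lemma indSum (u v : ZMod (2*ℓ+1)) :
    (∑ n ∈ Finset.range (2*ℓ+1), if v + ((n : ℕ) : ZMod (2*ℓ+1)) = u then (1:ℕ) else 0) = 1 := by
  rw [Finset.sum_eq_single_of_mem ((u - v).val)
      (Finset.mem_range.mpr (ZMod.val_lt _))]
  · rw [if_pos]
    rw [ZMod.natCast_rightInverse (u - v)]
    ring
  · intro n hn hne
    rw [if_neg]
    intro h
    apply hne
    refine cast_inj_lt (Finset.mem_range.mp hn) (ZMod.val_lt _) ?_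
    rw [ZMod.natCast_rightInverse (u - v), ← h]
    ring

lemma sum_range_double {M : Type*} [AddCommMonoid M] (f : ℕ → M) (n : ℕ) :
    ∑ i ∈ Finset.range (2*n), f i = ∑ j ∈ Finset.range n, (f (2*j) + f (2*j+1)) := by
  induction n with
  | zero => simp
  | succ n ih =>
      rw [show 2*(n+1) = (2*n+1)+1 from by ring, Finset.sum_range_succ, Finset.sum_range_succ,
        ih, Finset.sum_range_succ]
      abel

variable {K : Type*} [Field K]

lemma indSumV (x v : ZMod (2*ℓ+1)) :
    (∑ j ∈ Finset.range ℓ,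
      ((if v + ((2*j+1:ℕ):ZMod (2*ℓ+1)) = x then (1:ℕ) else 0)
        + (if v + ((2*j+1+1:ℕ):ZMod (2*ℓ+1)) = x then 1 else 0)))
      + (if v + ((0:ℕ):ZMod (2*ℓ+1)) = x then 1 else 0) = 1 := by
  refine Eq.trans ?_ (indSum x v)
  rw [Finset.sum_range_succ']
  congr 1
  exact (sum_range_double
    (fun n => if v + ((n+1:ℕ) : ZMod (2*ℓ+1)) = x then (1:ℕ) else 0) ℓ).symm

lemma decompV (v : ZMod (2*ℓ+1)) :
    (monom K (fun _ => 1) (ℓ+1) : Amb K (ZMod (2*ℓ+1))) =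
      (∏ j ∈ Finset.range ℓ,
        eGen K (v + ((2*j+1 : ℕ) : ZMod (2*ℓ+1))) (v + ((2*j+1+1 : ℕ) : ZMod (2*ℓ+1)))) *
      vGen K v := by
  rw [monom_eq]
  have hE : ∀ j ∈ Finset.range ℓ,
      (eGen K (v + ((2*j+1 : ℕ) : ZMod (2*ℓ+1))) (v + ((2*j+1+1 : ℕ) : ZMod (2*ℓ+1))) : Amb K _)
      = monomial (Finsupp.single (some (v + ((2*j+1 : ℕ) : ZMod (2*ℓ+1)))) 1
          + Finsupp.single (some (v + ((2*j+1+1 : ℕ) : ZMod (2*ℓ+1)))) 1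
          + Finsupp.single none 1) 1 :=
    fun j _ => eGen_eq _ _
  rw [Finset.prod_congr rfl hE, prod_monomial, vGen_eq, monomial_mul, one_mul]
  refine congrArg (fun e => (monomial e (1:K) : Amb K (ZMod (2*ℓ+1)))) ?_
  ext x
  match x with
  | none =>
      simp [mexp_none, Finsupp.finset_sum_apply, Finsupp.add_apply, Finsupp.single_apply]
  | some u =>
      have h0 := indSumV (ℓ := ℓ) u v
      simp only [Nat.cast_zero, add_zero] at h0
      simp only [mexp_some, Finsupp.add_apply, Finsupp.finset_sum_apply, Finsupp.single_apply,
        Option.some.injEq, reduceCtorEq, if_false, add_zero]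
      exact h0.symm

lemma indSumE (hl : 1 ≤ ℓ) (x v : ZMod (2*ℓ+1)) :
    ((if v + ((1+1:ℕ):ZMod (2*ℓ+1)) = x then (1:ℕ) else 0)
      + ∑ j ∈ Finset.range (ℓ-1),
        ((if v + ((2*(j+1)+1:ℕ):ZMod (2*ℓ+1)) = x then (1:ℕ) else 0)
          + (if v + ((2*(j+1)+1+1:ℕ):ZMod (2*ℓ+1)) = x then 1 else 0)))
      + ((if v + ((0:ℕ):ZMod (2*ℓ+1)) = x then 1 else 0)
          + (if v + ((0+1:ℕ):ZMod (2*ℓ+1)) = x then 1 else 0)) = 1 := by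
  obtain ⟨m, rfl⟩ : ∃ m, ℓ = m + 1 := ⟨ℓ - 1, by omega⟩
  refine Eq.trans ?_ (indSum x v)
  rw [Finset.sum_range_succ', sum_range_double, Finset.sum_range_succ']
  simp only [Nat.add_sub_cancel]
  abel

lemma decompE (hl : 1 ≤ ℓ) (v : ZMod (2*ℓ+1)) :
    (monom K (fun _ => 1) (ℓ+1) : Amb K (ZMod (2*ℓ+1))) =
      (vGen K (v + ((1+1 : ℕ) : ZMod (2*ℓ+1))) *
        ∏ j ∈ Finset.range (ℓ-1),
          eGen K (v + ((2*(j+1)+1 : ℕ) : ZMod (2*ℓ+1)))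
            (v + ((2*(j+1)+1+1 : ℕ) : ZMod (2*ℓ+1)))) *
      eGen K (v + ((0 : ℕ) : ZMod (2*ℓ+1))) (v + ((0+1 : ℕ) : ZMod (2*ℓ+1))) := by
  rw [monom_eq]
  have hE : ∀ j ∈ Finset.range (ℓ-1),
      (eGen K (v + ((2*(j+1)+1 : ℕ) : ZMod (2*ℓ+1)))
          (v + ((2*(j+1)+1+1 : ℕ) : ZMod (2*ℓ+1))) : Amb K _)
      = monomial (Finsupp.single (some (v + ((2*(j+1)+1 : ℕ) : ZMod (2*ℓ+1)))) 1
          + Finsupp.single (some (v + ((2*(j+1)+1+1 : ℕ) : ZMod (2*ℓ+1)))) 1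
          + Finsupp.single none 1) 1 :=
    fun j _ => eGen_eq _ _
  rw [Finset.prod_congr rfl hE, prod_monomial, vGen_eq, eGen_eq, monomial_mul, monomial_mul,
    one_mul, one_mul]
  refine congrArg (fun e => (monomial e (1:K) : Amb K (ZMod (2*ℓ+1)))) ?_
  ext x
  match x with
  | none =>
      simp [mexp_none, Finsupp.finset_sum_apply, Finsupp.single_apply]
      omega
  | some u =>
      have h0 := indSumE (ℓ := ℓ) hl u v
      simp only [mexp_some, Finsupp.add_apply, Finsupp.finset_sum_apply, Finsupp.single_apply,
        Option.some.injEq, reduceCtorEq, if_false, add_zero]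
      exact h0.symm

lemma shift_inj {x y : ℕ} (hx : x < 2*ℓ+1) (hy : y < 2*ℓ+1) {i₀ : ZMod (2*ℓ+1)}
    (h : i₀ + (x : ZMod (2*ℓ+1)) = i₀ + (y : ZMod (2*ℓ+1))) : x = y :=
  cast_inj_lt hx hy (add_left_cancel h)

lemma fexp_some {V : Type*} [DecidableEq V] [Fintype V] (F : Finset V) (i : V) :
    fexp F (some i) = if i ∈ F then 1 else 0 := mexp_some _ _ _

lemma fexp_none {V : Type*} [DecidableEq V] [Fintype V] (F : Finset V) :
    fexp F none = 1 := mexp_none _ _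

variable {V : Type*} [DecidableEq V] [Fintype V] {G : SimpleGraph V}

lemma coeff_mexp {a : V → ℕ} {b : ℕ} {u : RG K G}
    (hval : (u : Amb K V) = monom K a b) :
    coeff (mexp a b) (u : Amb K V) ≠ 0 := by
  rw [hval, monom_eq, coeff_monomial, if_pos rfl]
  exact one_ne_zero

lemma mem_Qi_bound {u : RG K G} {i : V} {a : V → ℕ} {b : ℕ}
    (hQ : u ∈ Qi K G i) (hval : (u : Amb K V) = monom K a b) :
    1 ≤ a i ∧ 1 ≤ b := by
  obtain ⟨s, hsS, e, hse, hle, -⟩ :=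
    exists_gen_of_mem_span (S := {u : RG K G | ∃ F : Finset V,
        IsFace G F ∧ i ∈ F ∧ (u : Amb K V) = faceMon K F})
      (fun s hs => by obtain ⟨F, _, _, hfm⟩ := hs; exact ⟨fexp F, by rw [hfm, faceMon_eq]⟩)
      hQ (coeff_mexp hval)
  obtain ⟨F, hF, hiF, hfm⟩ := hsS
  have hef : e = fexp F := by
    have h2 : (monomial e (1:K)) = monomial (fexp F) 1 := by rw [← hse, hfm, faceMon_eq]
    rcases (monomial_eq_monomial_iff _ _ _ _).mp h2 with ⟨h, -⟩ | ⟨h, -⟩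
    · exact h
    · exact absurd h one_ne_zero
  subst hef
  constructor
  · have h3 := (Finsupp.le_def.mp hle) (some i)
    rwa [mexp_some, fexp_some, if_pos hiF] at h3
  · have h3 := (Finsupp.le_def.mp hle) none
    rwa [mexp_none, fexp_none] at h3

lemma mem_PC_extract {u : RG K G} {C : Finset V} {a : V → ℕ} {b : ℕ}
    (hP : u ∈ PC K G C) (hval : (u : Amb K V) = monom K a b) :
    ∃ F : Finset V, IsFace G F ∧ F ⊆ C ∧ fexp F ≤ mexp a b ∧
      ∃ r : Amb K V, r ∈ RG K G ∧ coeff (mexp a b - fexp F) r ≠ 0 := by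
  obtain ⟨s, hsS, e, hse, hle, hr⟩ :=
    exists_gen_of_mem_span (S := {u : RG K G | ∃ F : Finset V,
        IsFace G F ∧ F ⊆ C ∧ (u : Amb K V) = faceMon K F})
      (fun s hs => by obtain ⟨F, _, _, hfm⟩ := hs; exact ⟨fexp F, by rw [hfm, faceMon_eq]⟩)
      hP (coeff_mexp hval)
  obtain ⟨F, hF, hFC, hfm⟩ := hsS
  have hef : e = fexp F := by
    have h2 : (monomial e (1:K)) = monomial (fexp F) 1 := by rw [← hse, hfm, faceMon_eq]
    rcases (monomial_eq_monomial_iff _ _ _ _).mp h2 with ⟨h, -⟩ | ⟨h, -⟩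
    · exact h
    · exact absurd h one_ne_zero
  subst hef
  exact ⟨F, hF, hFC, hle, hr⟩

lemma RG_sum_bound {u : RG K G} {a : V → ℕ} {b : ℕ}
    (hval : (u : Amb K V) = monom K a b) : (∑ i, a i) ≤ 2 * b := by
  have h := support_weight (G := G) (fun _ => 1) 2 (fun _ => by norm_num)
    (fun i j _ => by norm_num) u.2 (mexp a b)
    (mem_support_iff.mpr (coeff_mexp hval))
  simpa [mexp_some, mexp_none] using h

lemma not_middle (hl : 1 ≤ ℓ) {u : RG K (cycleG (2*ℓ+1))}
    (hPCall : ∀ C : Finset (ZMod (2*ℓ+1)),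
      IsMinVertexCover (cycleG (2*ℓ+1)) C → u ∈ PC K (cycleG (2*ℓ+1)) C)
    {a : ZMod (2*ℓ+1) → ℕ}
    (hval : (u : Amb K (ZMod (2*ℓ+1))) = monom K a (ℓ+1))
    {i₀ : ZMod (2*ℓ+1)} (hi2 : a i₀ = 2) (h1 : ∀ i, i ≠ i₀ → a i = 1) : False := by
  classical
  set Sfin : Finset (ZMod (2*ℓ+1)) :=
    (Finset.range ℓ).image (fun j : ℕ => i₀ + ((2*j : ℕ) : ZMod (2*ℓ+1))) with hSfin
  set C : Finset (ZMod (2*ℓ+1)) :=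
    ((Finset.range ℓ).image (fun j : ℕ => i₀ + ((2*j+1 : ℕ) : ZMod (2*ℓ+1)))) ∪
      {i₀ + ((2*ℓ : ℕ) : ZMod (2*ℓ+1))} with hC
  have hdisj : ∀ v ∈ C, v ∉ Sfin := by
    intro v hv hvS
    rw [hSfin, Finset.mem_image] at hvS
    obtain ⟨j', hj', hv'⟩ := hvS
    rw [Finset.mem_range] at hj'
    rw [hC, Finset.mem_union] at hv
    rcases hv with hv | hv
    · rw [Finset.mem_image] at hv
      obtain ⟨j, hj, hvj⟩ := hv
      rw [Finset.mem_range] at hj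
      have := shift_inj (by omega) (by omega) (hvj.trans hv'.symm)
      omega
    · rw [Finset.mem_singleton] at hv
      have := shift_inj (by omega) (by omega) (hv'.trans hv)
      omega
  have hcardS : Sfin.card = ℓ := by
    rw [hSfin, Finset.card_image_of_injOn, Finset.card_range]
    intro x hx y hy hxy
    simp only [Finset.coe_range, Set.mem_Iio] at hx hy
    have := shift_inj (by omega) (by omega) hxy
    omega
  have hcardC : C.card = ℓ + 1 := by
    rw [hC, Finset.card_union_of_disjoint, Finset.card_singleton,
      Finset.card_image_of_injOn, Finset.card_range]
    · intro x hx y hy hxy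
      simp only [Finset.coe_range, Set.mem_Iio] at hx hy
      have := shift_inj (by omega) (by omega) hxy
      omega
    · rw [Finset.disjoint_right]
      intro v hv hv'
      rw [Finset.mem_singleton] at hv
      rw [Finset.mem_image] at hv'
      obtain ⟨j, hj, hvj⟩ := hv'
      rw [Finset.mem_range] at hj
      have := shift_inj (by omega) (by omega) (hvj.trans hv)
      omega
  have hunion : ∀ v : ZMod (2*ℓ+1), v ∈ C ∨ v ∈ Sfin := by
    have hcup : C ∪ Sfin = Finset.univ := by
      apply Finset.eq_univ_of_card
      rw [Finset.card_union_of_disjoint (Finset.disjoint_left.mpr hdisj), hcardC, hcardS,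
        ZMod.card]
      omega
    intro v
    have : v ∈ C ∪ Sfin := by rw [hcup]; exact Finset.mem_univ v
    exact Finset.mem_union.mp this
  have hSadj : ∀ v, v ∈ Sfin → v + 1 ∈ Sfin → False := by
    intro v hv hv1
    rw [hSfin, Finset.mem_image] at hv hv1
    obtain ⟨j, hj, hvj⟩ := hv
    obtain ⟨j', hj', hvj'⟩ := hv1
    rw [Finset.mem_range] at hj hj'
    have heq : i₀ + ((2*j+1 : ℕ) : ZMod (2*ℓ+1)) = i₀ + ((2*j' : ℕ) : ZMod (2*ℓ+1)) := by
      rw [hvj']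
      rw [← hvj]
      push_cast
      ring
    have := shift_inj (by omega) (by omega) heq
    omega
  have hcov : IsVertexCover (cycleG (2*ℓ+1)) C := by
    intro i j hadj
    by_contra hcon
    push_neg at hcon
    have hiS : i ∈ Sfin := (hunion i).resolve_left hcon.1
    have hjS : j ∈ Sfin := (hunion j).resolve_left hcon.2
    rcases hadj.2 with h | h
    · exact hSadj i hiS (h ▸ hjS)
    · exact hSadj j hjS (h ▸ hiS)
  have hmin : IsMinVertexCover (cycleG (2*ℓ+1)) C :=
    ⟨hcov, fun C' hsub hcov' => Finset.eq_of_subset_of_card_le hsub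
      (by have := cover_card hl hcov'; omega)⟩
  obtain ⟨F, hF, hFC, hle, r, hrRG, hrc⟩ := mem_PC_extract (hPCall C hmin) hval
  have hFS : ∀ v ∈ F, v ∉ Sfin := fun v hv => hdisj v (hFC hv)
  set w : ZMod (2*ℓ+1) → ℕ := fun v => if v ∈ Sfin then 1 else 0 with hw
  have hbound := support_weight (G := cycleG (2*ℓ+1)) w 1
    (fun i => by simp only [hw]; split <;> omega)
    (fun i j hadj => by
      simp only [hw]
      by_cases hi : i ∈ Sfin
      · by_cases hj : j ∈ Sfin
        · exfalso
          rcases hadj.2 with h | h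
          · exact hSadj i hi (h ▸ hj)
          · exact hSadj j hj (h ▸ hi)
        · simp [hi, hj]
      · by_cases hj : j ∈ Sfin
        · simp [hi, hj]
        · simp [hi, hj])
    hrRG (mexp a (ℓ+1) - fexp F) (mem_support_iff.mpr hrc)
  have hnone : (mexp a (ℓ+1) - fexp F) none = ℓ := by
    rw [Finsupp.tsub_apply, mexp_none, fexp_none]
    omega
  have hLHS : (∑ i, w i * ((mexp a (ℓ+1) - fexp F) (some i))) = ∑ i, w i * a i :=
    Finset.sum_congr rfl fun v _ => by
      rw [Finsupp.tsub_apply, mexp_some, fexp_some]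
      by_cases hv : v ∈ Sfin
      · have hvF : v ∉ F := fun h => hFS v h hv
        simp [hw, hv, hvF]
      · simp [hw, hv]
  have hsumw : (∑ i, w i * a i) = ℓ + 1 := by
    have e1 : (∑ i, w i * a i) = ∑ v ∈ Sfin, a v := by
      rw [hw]
      dsimp only
      rw [show (∑ i, (if i ∈ Sfin then 1 else 0) * a i)
          = ∑ i, (if i ∈ Sfin then a i else 0) from
        Finset.sum_congr rfl fun i _ => by split <;> simp]
      rw [Finset.sum_ite_mem, Finset.univ_inter]
    have e2 : (∑ v ∈ Sfin, a v) = ∑ j ∈ Finset.range ℓ, a (i₀ + ((2*j : ℕ) : ZMod (2*ℓ+1))) := by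
      rw [hSfin]
      apply Finset.sum_image
      intro x hx y hy hxy
      rw [Finset.mem_coe, Finset.mem_range] at hx hy
      have := shift_inj (by omega) (by omega) hxy
      omega
    rw [e1, e2, ← Finset.add_sum_erase _ _ (Finset.mem_range.mpr (by omega : 0 < ℓ))]
    have e3 : a (i₀ + ((2*0 : ℕ) : ZMod (2*ℓ+1))) = 2 := by
      norm_num
      exact hi2
    have e4 : (∑ j ∈ (Finset.range ℓ).erase 0, a (i₀ + ((2*j : ℕ) : ZMod (2*ℓ+1)))) = ℓ - 1 := by
      rw [Finset.sum_congr rfl (fun j hj => ?_), Finset.sum_const, smul_eq_mul, mul_one,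
        Finset.card_erase_of_mem (Finset.mem_range.mpr (by omega : 0 < ℓ)), Finset.card_range]
      rw [Finset.mem_erase, Finset.mem_range] at hj
      apply h1
      intro hcon
      have heq : i₀ + ((2*j : ℕ) : ZMod (2*ℓ+1)) = i₀ + ((0 : ℕ) : ZMod (2*ℓ+1)) := by
        rw [hcon]; norm_num
      have := shift_inj (by omega) (by omega) heq
      omega
    rw [e3, e4]
    omega
  rw [hLHS, hsumw, hnone, one_mul] at hbound
  omega

lemma faceMon_single {V : Type*} [DecidableEq V] (i : V) :
    (faceMon K ({i} : Finset V) : Amb K V) = vGen K i := by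
  rw [faceMon, Finset.prod_singleton, vGen]

lemma faceMon_pair {V : Type*} [DecidableEq V] {i j : V} (h : i ≠ j) :
    (faceMon K ({i, j} : Finset V) : Amb K V) = eGen K i j := by
  rw [faceMon, Finset.prod_pair h, eGen]

lemma prodV_mem (hl : 1 ≤ ℓ) (v : ZMod (2*ℓ+1)) :
    (∏ j ∈ Finset.range ℓ, eGen K (v + ((2*j+1 : ℕ) : ZMod (2*ℓ+1)))
      (v + ((2*j+1+1 : ℕ) : ZMod (2*ℓ+1)))) ∈ RG K (cycleG (2*ℓ+1)) := by
  refine prod_mem fun j _ => eGen_mem ?_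
  have h : (v + ((2*j+1+1 : ℕ) : ZMod (2*ℓ+1))) = (v + ((2*j+1 : ℕ) : ZMod (2*ℓ+1))) + 1 := by
    push_cast; ring
  rw [h]
  exact adj_succ hl _

lemma prodE_mem (hl : 1 ≤ ℓ) (v : ZMod (2*ℓ+1)) :
    (vGen K (v + ((1+1 : ℕ) : ZMod (2*ℓ+1))) *
      ∏ j ∈ Finset.range (ℓ-1),
        eGen K (v + ((2*(j+1)+1 : ℕ) : ZMod (2*ℓ+1)))
          (v + ((2*(j+1)+1+1 : ℕ) : ZMod (2*ℓ+1)))) ∈ RG K (cycleG (2*ℓ+1)) := by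
  refine mul_mem (vGen_mem _) (prod_mem fun j _ => eGen_mem ?_)
  have h : (v + ((2*(j+1)+1+1 : ℕ) : ZMod (2*ℓ+1)))
      = (v + ((2*(j+1)+1 : ℕ) : ZMod (2*ℓ+1))) + 1 := by
    push_cast; ring
  rw [h]
  exact adj_succ hl _

lemma w0_mem (hl : 1 ≤ ℓ) :
    (monom K (fun _ => 1) (ℓ+1) : Amb K (ZMod (2*ℓ+1))) ∈ RG K (cycleG (2*ℓ+1)) := by
  rw [decompV (0 : ZMod (2*ℓ+1))]
  exact mul_mem (prodV_mem hl 0) (vGen_mem 0)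

end Stmt17Aux

open Stmt17Aux


/-- Let `G` be the odd cycle on `k = 2ℓ+1` vertices and suppose the
canonical module of `R_G` is `ω = (⋂_C P_C) ∩ P₀ ∩ Q₁ ∩ ⋯ ∩ Q_k`.  Then every
monomial of `ω` has `t`-degree at least `ℓ+1`, the unique monomial of `t`-degree
`ℓ+1` in `ω` is `w₀ = (x₁⋯x_k) t^{ℓ+1}`, and `w₀` does lie in `ω`: the initial degree
of `ω` is `ℓ+1` and `dim_K (ω)_{ℓ+1} = 1`, i.e. `R_G` is pseudo-Gorenstein. -/
theorem stmt17 (K : Type*) [Field K] (ℓ : ℕ) (hl : 1 ≤ ℓ) :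
    (∀ u : RG K (cycleG (2 * ℓ + 1)), u ∈ omegaCycle K (2 * ℓ + 1) →
      ∀ (a : ZMod (2 * ℓ + 1) → ℕ) (b : ℕ),
        (u : Amb K (ZMod (2 * ℓ + 1))) = monom K a b → ℓ + 1 ≤ b) ∧
    (∀ u : RG K (cycleG (2 * ℓ + 1)), u ∈ omegaCycle K (2 * ℓ + 1) →
      ∀ a : ZMod (2 * ℓ + 1) → ℕ,
        (u : Amb K (ZMod (2 * ℓ + 1))) = monom K a (ℓ + 1) →
          (u : Amb K (ZMod (2 * ℓ + 1))) = monom K (fun _ => 1) (ℓ + 1)) ∧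
    ∃ u : RG K (cycleG (2 * ℓ + 1)), u ∈ omegaCycle K (2 * ℓ + 1) ∧
      (u : Amb K (ZMod (2 * ℓ + 1))) = monom K (fun _ => 1) (ℓ + 1) := by
  classical
  have card_univ : (Finset.univ : Finset (ZMod (2*ℓ+1))).card = 2*ℓ+1 := by
    rw [Finset.card_univ, ZMod.card]
  refine ⟨?_, ?_, ?_⟩
  · -- Part 1
    intro u hu a b hval
    have hu' : u ∈ ((⨅ C ∈ {C : Finset (ZMod (2*ℓ+1)) | IsMinVertexCover (cycleG (2*ℓ+1)) C},
        PC K (cycleG (2*ℓ+1)) C) ⊓ P0 K (cycleG (2*ℓ+1)) ⊓ ⨅ i, Qi K (cycleG (2*ℓ+1)) i) := hu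
    have hQ : ∀ i, u ∈ Qi K (cycleG (2*ℓ+1)) i :=
      fun i => Ideal.mem_iInf.mp (Ideal.mem_inf.mp hu').2 i
    have ha : ∀ i, 1 ≤ a i := fun i => (mem_Qi_bound (hQ i) hval).1
    have hsum := RG_sum_bound hval
    have hcard : 2*ℓ+1 ≤ (∑ i : ZMod (2*ℓ+1), a i) := by
      have h2 := Finset.card_nsmul_le_sum Finset.univ a 1 (fun i _ => ha i)
      rw [card_univ, smul_eq_mul, mul_one] at h2
      exact h2
    omega
  · -- Part 2
    intro u hu a hval
    have hu' : u ∈ ((⨅ C ∈ {C : Finset (ZMod (2*ℓ+1)) | IsMinVertexCover (cycleG (2*ℓ+1)) C},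
        PC K (cycleG (2*ℓ+1)) C) ⊓ P0 K (cycleG (2*ℓ+1)) ⊓ ⨅ i, Qi K (cycleG (2*ℓ+1)) i) := hu
    have hQ : ∀ i, u ∈ Qi K (cycleG (2*ℓ+1)) i :=
      fun i => Ideal.mem_iInf.mp (Ideal.mem_inf.mp hu').2 i
    have hPCall : ∀ C : Finset (ZMod (2*ℓ+1)), IsMinVertexCover (cycleG (2*ℓ+1)) C →
        u ∈ PC K (cycleG (2*ℓ+1)) C := by
      intro C hC
      have h3 := Ideal.mem_iInf.mp (Ideal.mem_inf.mp (Ideal.mem_inf.mp hu').1).1 C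
      exact Ideal.mem_iInf.mp h3 hC
    have ha : ∀ i, 1 ≤ a i := fun i => (mem_Qi_bound (hQ i) hval).1
    have hsum := RG_sum_bound hval
    by_cases hall : ∀ i, a i = 1
    · rw [hval]
      congr 1
      funext i
      exact hall i
    · exfalso
      push_neg at hall
      obtain ⟨i₀, hi₀⟩ := hall
      have hsplit : (∑ i : ZMod (2*ℓ+1), a i)
          = a i₀ + ∑ i ∈ Finset.univ.erase i₀, a i :=
        (Finset.add_sum_erase _ _ (Finset.mem_univ i₀)).symm
      have hcard1 : (Finset.univ.erase i₀).card = 2*ℓ := by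
        rw [Finset.card_erase_of_mem (Finset.mem_univ i₀), card_univ]
        omega
      have hge1 : (Finset.univ.erase i₀).card ≤ ∑ i ∈ Finset.univ.erase i₀, a i := by
        have h2 := Finset.card_nsmul_le_sum (Finset.univ.erase i₀) a 1 (fun i _ => ha i)
        rwa [smul_eq_mul, mul_one] at h2
      have hai₀ : a i₀ = 2 := by
        have := ha i₀
        omega
      have h1 : ∀ i, i ≠ i₀ → a i = 1 := by
        intro i hne
        by_contra hcon
        have hi2 : 2 ≤ a i := by have := ha i; omega
        have hmem : i ∈ Finset.univ.erase i₀ := Finset.mem_erase.mpr ⟨hne, Finset.mem_univ i⟩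
        have hsplit2 : (∑ v ∈ Finset.univ.erase i₀, a v)
            = a i + ∑ v ∈ (Finset.univ.erase i₀).erase i, a v :=
          (Finset.add_sum_erase _ _ hmem).symm
        have hcard2 : ((Finset.univ.erase i₀).erase i).card = 2*ℓ - 1 := by
          rw [Finset.card_erase_of_mem hmem, hcard1]
        have hge2 : ((Finset.univ.erase i₀).erase i).card
            ≤ ∑ v ∈ (Finset.univ.erase i₀).erase i, a v := by
          have h2 := Finset.card_nsmul_le_sum ((Finset.univ.erase i₀).erase i) a 1
            (fun v _ => ha v)
          rwa [smul_eq_mul, mul_one] at h2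
        omega
      exact not_middle hl hPCall hval hai₀ h1
  · -- Part 3
    refine ⟨⟨monom K (fun _ => 1) (ℓ+1), w0_mem hl⟩, ?_, rfl⟩
    show (⟨monom K (fun _ => 1) (ℓ+1), w0_mem hl⟩ : RG K (cycleG (2*ℓ+1)))
      ∈ ((⨅ C ∈ {C : Finset (ZMod (2*ℓ+1)) | IsMinVertexCover (cycleG (2*ℓ+1)) C},
        PC K (cycleG (2*ℓ+1)) C) ⊓ P0 K (cycleG (2*ℓ+1)) ⊓ ⨅ i, Qi K (cycleG (2*ℓ+1)) i)
    refine Ideal.mem_inf.mpr ⟨Ideal.mem_inf.mpr ⟨?_, ?_⟩, ?_⟩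
    · -- the P_C's
      refine Ideal.mem_iInf.mpr fun C => Ideal.mem_iInf.mpr fun hC => ?_
      obtain ⟨v, hv, hv1⟩ := cover_has_edge hl hC.1
      have hadj : (cycleG (2*ℓ+1)).Adj v (v+1) := adj_succ hl v
      have hvne : v ≠ v + 1 := hadj.1
      have c0 : v + ((0 : ℕ) : ZMod (2*ℓ+1)) = v := by norm_num
      have c1 : v + ((0+1 : ℕ) : ZMod (2*ℓ+1)) = v + 1 := by norm_num
      have hdec := decompE (K := K) hl v
      rw [c0, c1] at hdec
      have hgmem : (⟨eGen K v (v+1), eGen_mem hadj⟩ : RG K (cycleG (2*ℓ+1)))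
          ∈ {u : RG K (cycleG (2*ℓ+1)) | ∃ F : Finset (ZMod (2*ℓ+1)),
            IsFace (cycleG (2*ℓ+1)) F ∧ F ⊆ C ∧ (u : Amb K (ZMod (2*ℓ+1))) = faceMon K F} := by
        refine ⟨{v, v+1}, Or.inr (Or.inr ⟨v, v+1, hadj, rfl⟩), ?_, (faceMon_pair hvne).symm⟩
        intro x hx
        rcases Finset.mem_insert.mp hx with h | h
        · exact h ▸ hv
        · rw [Finset.mem_singleton] at h
          exact h ▸ hv1
      have heq : (⟨monom K (fun _ => 1) (ℓ+1), w0_mem hl⟩ : RG K (cycleG (2*ℓ+1)))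
          = ⟨_, prodE_mem hl v⟩ * ⟨eGen K v (v+1), eGen_mem hadj⟩ :=
        Subtype.ext hdec
      rw [heq]
      exact Ideal.mul_mem_left _ _ (Ideal.subset_span hgmem)
    · -- P0
      have hdec := decompV (K := K) (0 : ZMod (2*ℓ+1))
      have hgmem : (⟨vGen K (0 : ZMod (2*ℓ+1)), vGen_mem 0⟩ : RG K (cycleG (2*ℓ+1)))
          ∈ {u : RG K (cycleG (2*ℓ+1)) | ((u : Amb K (ZMod (2*ℓ+1))) = tGen K)
            ∨ ∃ i, (u : Amb K (ZMod (2*ℓ+1))) = vGen K i} := Or.inr ⟨0, rfl⟩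
      have heq : (⟨monom K (fun _ => 1) (ℓ+1), w0_mem hl⟩ : RG K (cycleG (2*ℓ+1)))
          = ⟨_, prodV_mem hl 0⟩ * ⟨vGen K (0 : ZMod (2*ℓ+1)), vGen_mem 0⟩ :=
        Subtype.ext hdec
      rw [heq]
      exact Ideal.mul_mem_left _ _ (Ideal.subset_span hgmem)
    · -- the Q_i's
      refine Ideal.mem_iInf.mpr fun i => ?_
      have hdec := decompV (K := K) i
      have hgmem : (⟨vGen K i, vGen_mem i⟩ : RG K (cycleG (2*ℓ+1)))
          ∈ {u : RG K (cycleG (2*ℓ+1)) | ∃ F : Finset (ZMod (2*ℓ+1)),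
            IsFace (cycleG (2*ℓ+1)) F ∧ i ∈ F ∧ (u : Amb K (ZMod (2*ℓ+1))) = faceMon K F} :=
        ⟨{i}, Or.inr (Or.inl ⟨i, rfl⟩), Finset.mem_singleton_self i, (faceMon_single i).symm⟩
      have heq : (⟨monom K (fun _ => 1) (ℓ+1), w0_mem hl⟩ : RG K (cycleG (2*ℓ+1)))
          = ⟨_, prodV_mem hl i⟩ * ⟨vGen K i, vGen_mem i⟩ :=
        Subtype.ext hdec
      rw [heq]
      exact Ideal.mul_mem_left _ _ (Ideal.subset_span hgmem)
end
end
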